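/- arXiv:2209.03012 — 7 statements merged into one kernel-verified Lean document; each statement's English description precedes it below -/
import Mathlib

section
/- Let 1 < p < ∞. For all real numbers a, b > 0 and c, d ≥ 0, one has |a-b|^{p-2}(a-b) · (c^p/a^{p-1} - d^p/b^{p-1}) ≤ |c-d|^p. -/
open Real

lemma picone_core (p : ℝ) (hp : 1 < p) (s c d : ℝ) (hs0 : 0 < s) (hs1 : s < 1)
    (hc : 0 ≤ c) (hd : 0 ≤ d) :
    s ^ (p - 1) * c ^ p - (s / (1 - s)) ^ (p - 1) * d ^ p ≤ |c - d| ^ p := by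
  have hp1 : (0:ℝ) < p - 1 := by linarith
  have h1s : (0:ℝ) < 1 - s := by linarith
  rcases le_or_gt c d with h | h
  · have hs' : s ≤ s / (1 - s) := by
      rw [le_div_iff₀ h1s]; nlinarith
    have h1 : s ^ (p - 1) * c ^ p ≤ (s / (1 - s)) ^ (p - 1) * d ^ p := by
      apply mul_le_mul
      · exact Real.rpow_le_rpow hs0.le hs' hp1.le
      · exact Real.rpow_le_rpow hc h (by linarith)
      · exact Real.rpow_nonneg hc p
      · exact Real.rpow_nonneg (by positivity) _
    have h2 : 0 ≤ |c - d| ^ p := Real.rpow_nonneg (abs_nonneg _) p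
    linarith
  · have hcd : 0 < c - d := sub_pos.2 h
    -- convexity step
    have hconv := (convexOn_rpow hp.le).2
      (Set.mem_Ici.2 (by positivity : (0:ℝ) ≤ d / (1 - s)))
      (Set.mem_Ici.2 (by positivity : (0:ℝ) ≤ (c - d) / s))
      h1s.le hs0.le (by ring)
    simp only [smul_eq_mul] at hconv
    have hc_eq : (1 - s) * (d / (1 - s)) + s * ((c - d) / s) = c := by
      field_simp; ring
    rw [hc_eq] at hconv
    have e1 : (d / (1 - s)) ^ p = d ^ p / (1 - s) ^ p :=
      Real.div_rpow hd h1s.le _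
    have e2 : ((c - d) / s) ^ p = (c - d) ^ p / s ^ p :=
      Real.div_rpow hcd.le hs0.le _
    rw [e1, e2] at hconv
    have key : c ^ p ≤ (1 - s) ^ (1 - p) * d ^ p + s ^ (1 - p) * (c - d) ^ p := by
      have f1 : (1 - s) ^ (1 - p) = (1 - s) / (1 - s) ^ p := by
        rw [Real.rpow_sub h1s, Real.rpow_one]
      have f2 : s ^ (1 - p) = s / s ^ p := by
        rw [Real.rpow_sub hs0, Real.rpow_one]
      rw [f1, f2]
      calc c ^ p ≤ (1 - s) * (d ^ p / (1 - s) ^ p) + s * ((c - d) ^ p / s ^ p) := hconv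
        _ = (1 - s) / (1 - s) ^ p * d ^ p + s / s ^ p * (c - d) ^ p := by ring
    -- multiply by s ^ (p-1)
    have hsp : 0 < s ^ (p - 1) := Real.rpow_pos_of_pos hs0 _
    have g1 : s ^ (p - 1) * s ^ (1 - p) = 1 := by
      rw [← Real.rpow_add hs0]; norm_num
    have g2 : s ^ (p - 1) * (1 - s) ^ (1 - p) = (s / (1 - s)) ^ (p - 1) := by
      rw [Real.div_rpow hs0.le h1s.le]
      rw [show (1 : ℝ) - p = -(p - 1) by ring, Real.rpow_neg h1s.le]
      field_simp
    have habs : |c - d| = c - d := abs_of_pos hcd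
    rw [habs]
    have h4 := mul_le_mul_of_nonneg_left key hsp.le
    calc s ^ (p - 1) * c ^ p - (s / (1 - s)) ^ (p - 1) * d ^ p
        ≤ s ^ (p - 1) * ((1 - s) ^ (1 - p) * d ^ p + s ^ (1 - p) * (c - d) ^ p)
          - (s / (1 - s)) ^ (p - 1) * d ^ p := by linarith
      _ = (s ^ (p - 1) * (1 - s) ^ (1 - p)) * d ^ p
          + (s ^ (p - 1) * s ^ (1 - p)) * (c - d) ^ p
          - (s / (1 - s)) ^ (p - 1) * d ^ p := by ring
      _ = (c - d) ^ p := by rw [g1, g2]; ring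

lemma picone_half (p : ℝ) (hp : 1 < p) (a b c d : ℝ) (ha : 0 < a) (hb : 0 < b)
    (hc : 0 ≤ c) (hd : 0 ≤ d) (hab : b < a) :
    (a - b) ^ (p - 1) * (c ^ p / a ^ (p - 1) - d ^ p / b ^ (p - 1)) ≤ |c - d| ^ p := by
  have hab' : 0 < a - b := sub_pos.2 hab
  set s : ℝ := (a - b) / a with hs
  have hs0 : 0 < s := by positivity
  have hs1 : s < 1 := by
    rw [hs, div_lt_one ha]; linarith
  have hcore := picone_core p hp s c d hs0 hs1 hc hd
  have e1 : s ^ (p - 1) = (a - b) ^ (p - 1) / a ^ (p - 1) := by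
    rw [hs]; exact Real.div_rpow hab'.le ha.le _
  have e2 : s / (1 - s) = (a - b) / b := by
    rw [hs]; field_simp; rw [sub_sub_cancel, div_self hb.ne']
  have e3 : ((a - b) / b) ^ (p - 1) = (a - b) ^ (p - 1) / b ^ (p - 1) :=
    Real.div_rpow hab'.le hb.le _
  rw [e2, e3, e1] at hcore
  calc (a - b) ^ (p - 1) * (c ^ p / a ^ (p - 1) - d ^ p / b ^ (p - 1))
      = (a - b) ^ (p - 1) / a ^ (p - 1) * c ^ p
        - (a - b) ^ (p - 1) / b ^ (p - 1) * d ^ p := by ring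
    _ ≤ |c - d| ^ p := hcore

theorem stmt_0 (p : ℝ) (hp : 1 < p) (a b c d : ℝ) (ha : 0 < a) (hb : 0 < b)
    (hc : 0 ≤ c) (hd : 0 ≤ d) :
    |a - b| ^ (p - 2) * (a - b) * (c ^ p / a ^ (p - 1) - d ^ p / b ^ (p - 1)) ≤ |c - d| ^ p := by
  rcases lt_trichotomy a b with h | h | h
  · have hba : 0 < b - a := sub_pos.2 h
    have habs : |a - b| = b - a := by rw [abs_sub_comm, abs_of_pos hba]
    have hpow : (b - a) ^ (p - 2) * (b - a) = (b - a) ^ (p - 1) := by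
      rw [← Real.rpow_add_one hba.ne']; congr 1; ring
    have := picone_half p hp b a d c hb ha hd hc h
    calc |a - b| ^ (p - 2) * (a - b) * (c ^ p / a ^ (p - 1) - d ^ p / b ^ (p - 1))
        = (b - a) ^ (p - 2) * (b - a) * (d ^ p / b ^ (p - 1) - c ^ p / a ^ (p - 1)) := by
          rw [habs]; ring
      _ = (b - a) ^ (p - 1) * (d ^ p / b ^ (p - 1) - c ^ p / a ^ (p - 1)) := by rw [hpow]
      _ ≤ |d - c| ^ p := this
      _ = |c - d| ^ p := by rw [abs_sub_comm]
  · subst h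
    simp only [sub_self, mul_zero, zero_mul]
    exact Real.rpow_nonneg (abs_nonneg _) p
  · have hab : 0 < a - b := sub_pos.2 h
    have habs : |a - b| = a - b := abs_of_pos hab
    have hpow : (a - b) ^ (p - 2) * (a - b) = (a - b) ^ (p - 1) := by
      rw [← Real.rpow_add_one hab.ne']; congr 1; ring
    rw [habs, hpow]
    exact picone_half p hp a b c d ha hb hc hd h
end

section
/- Let 1 < p < ∞, a, b > 0, c, d ≥ 0, and suppose equality holds in the discrete Picone inequality, i.e. |a-b|^{p-2}(a-b) · (c^p/a^{p-1} - d^p/b^{p-1}) = |c-d|^p. If c > 0 and d > 0, then c/a = d/b. -/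
lemma picone_aux (p : ℝ) (hp : 1 < p) (a b c d : ℝ) (ha : 0 < a) (hb : 0 < b)
    (hc : 0 < c) (hd : 0 < d) (hba : b < a)
    (heq : |a - b| ^ (p - 2) * (a - b) * (c ^ p / a ^ (p - 1) - d ^ p / b ^ (p - 1))
      = |c - d| ^ p) :
    c / a = d / b := by
  have hab : 0 < a - b := by linarith
  have hp1 : (0:ℝ) < p - 1 := by linarith
  rw [abs_of_pos hab] at heq
  have hZ : (a-b) ^ (p-2) * (a-b) = (a-b)^(p-1) := by
    rw [show p - 1 = (p-2)+1 by ring, Real.rpow_add_one hab.ne']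
  rw [hZ] at heq
  rcases le_or_gt c d with hcd | hcd
  · -- contradiction: LHS < 0 ≤ RHS
    exfalso
    have hnum : c^p ≤ d^p := Real.rpow_le_rpow hc.le hcd (by positivity)
    have hden : b^(p-1) < a^(p-1) := Real.rpow_lt_rpow hb.le hba hp1
    have hbp : (0:ℝ) < b^(p-1) := by positivity
    have hap : (0:ℝ) < a^(p-1) := by positivity
    have hcp : (0:ℝ) < c^p := by positivity
    have hfrac : c^p/a^(p-1) < d^p/b^(p-1) := by
      have h1 : c^p/a^(p-1) < c^p/b^(p-1) := by
        apply div_lt_div_of_pos_left hcp hbp hden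
      have h2 : c^p/b^(p-1) ≤ d^p/b^(p-1) := by gcongr
      linarith
    have hneg : (a-b)^(p-1) * (c^p/a^(p-1) - d^p/b^(p-1)) < 0 :=
      mul_neg_of_pos_of_neg (by positivity) (by linarith)
    have hRHS : (0:ℝ) ≤ |c-d|^p := Real.rpow_nonneg (abs_nonneg _) _
    linarith
  · -- c > d
    rw [abs_of_pos (by linarith : (0:ℝ) < c - d)] at heq
    have hcd0 : 0 < c - d := by linarith
    set u : ℝ := (c-d)/(a-b) with hu_def
    set v : ℝ := d/b with hv_def
    have hu : 0 ≤ u := by positivity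
    have hv : 0 ≤ v := by positivity
    have hw1 : 0 < (a-b)/a := by positivity
    have hw2 : 0 < b/a := by positivity
    have hsum : (a-b)/a + b/a = 1 := by field_simp; ring
    have hA : a ^ p = a ^ (p-1) * a := by rw [← Real.rpow_add_one ha.ne', sub_add_cancel]
    have hB : b ^ p = b ^ (p-1) * b := by rw [← Real.rpow_add_one hb.ne', sub_add_cancel]
    have hAB : (a-b) ^ p = (a-b) ^ (p-1) * (a-b) := by
      rw [← Real.rpow_add_one hab.ne', sub_add_cancel]
    have hap : (0:ℝ) < a^(p-1) := by positivity
    have hbp : (0:ℝ) < b^(p-1) := by positivity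
    have habp : (0:ℝ) < (a-b)^(p-1) := by positivity
    have heq2 : (a-b)^(p-1) * c^p * b^(p-1) - (a-b)^(p-1) * d^p * a^(p-1)
        = (c-d)^p * (a^(p-1) * b^(p-1)) := by
      field_simp at heq
      linear_combination heq
    have key : ((a-b)/a) * u^p + (b/a) * v^p = (c/a)^p := by
      rw [hu_def, hv_def, Real.div_rpow hcd0.le hab.le, Real.div_rpow hd.le hb.le,
        Real.div_rpow hc.le ha.le, hA, hB, hAB]
      field_simp
      linear_combination (-1 : ℝ) * heq2
    suffices huv : u = v by
      rw [hu_def, hv_def, div_eq_div_iff hab.ne' hb.ne'] at huv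
      rw [div_eq_div_iff ha.ne' hb.ne']
      linarith [huv]
    by_contra hne
    have hstrict := (strictConvexOn_rpow hp).2 (Set.mem_Ici.2 hu) (Set.mem_Ici.2 hv) hne hw1 hw2 hsum
    simp only [smul_eq_mul] at hstrict
    have hcomb : (a-b)/a * u + b/a * v = c/a := by
      rw [hu_def, hv_def]; field_simp; ring
    rw [hcomb, key] at hstrict
    exact lt_irrefl _ hstrict

theorem stmt_1 (p : ℝ) (hp : 1 < p) (a b c d : ℝ) (ha : 0 < a) (hb : 0 < b)
    (hc : 0 < c) (hd : 0 < d)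
    (heq : |a - b| ^ (p - 2) * (a - b) * (c ^ p / a ^ (p - 1) - d ^ p / b ^ (p - 1))
      = |c - d| ^ p) :
    c / a = d / b := by
  rcases lt_trichotomy b a with h | h | h
  · exact picone_aux p hp a b c d ha hb hc hd h heq
  · -- a = b : LHS is 0, so |c-d|^p = 0, hence c = d
    subst h
    simp only [sub_self] at heq
    rw [mul_zero, zero_mul] at heq
    have : |c - d| = 0 := by
      by_contra h0
      have h1 : 0 < |c - d| := lt_of_le_of_ne (abs_nonneg _) (Ne.symm h0)
      have : (0:ℝ) < |c - d| ^ p := Real.rpow_pos_of_pos h1 p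
      linarith [this, heq.symm]
    have : c = d := by rwa [abs_eq_zero, sub_eq_zero] at this
    rw [this]
  · -- b > a : apply aux symmetrically
    have heq' : |b - a| ^ (p - 2) * (b - a) * (d ^ p / b ^ (p - 1) - c ^ p / a ^ (p - 1))
        = |d - c| ^ p := by
      rw [abs_sub_comm b a, abs_sub_comm d c, ← heq]; ring
    exact (picone_aux p hp b a d c hb ha hd hc h heq').symm
end

section
/- Let 1 < p < ∞, 0 < s < 1 and M > 0. Let β ∈ ℝ with (sp-1)/p < β < s, and let U_β(t) = t^β for t > 0 extended by 0 for t ≤ 0. Then the Gagliardo seminorm of U_β on (0,M) satisfies [U_β]^p_{W^{s,p}((0,M))} ≤ ( ∫_0^1 |1-τ^β|^p (1+τ^{sp-βp-1}) / (1-τ)^{1+sp} dτ ) · M^{βp-sp+1}/(βp-sp+1); in particular it is finite. -/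
open MeasureTheory Set Real

lemma calc1 (β p s : ℝ) {x τ : ℝ} (hx : 0 < x) (hτ0 : 0 < τ) (hτ1 : τ < 1) :
    x * (|x ^ β - (x * τ) ^ β| ^ p / |x - x * τ| ^ (1 + s * p)) =
      x ^ (β * p - s * p) * (|1 - τ ^ β| ^ p / (1 - τ) ^ (1 + s * p)) := by
  have h1τ : (0:ℝ) < 1 - τ := by linarith
  have h1 : |x ^ β - (x * τ) ^ β| = x ^ β * |1 - τ ^ β| := by
    rw [Real.mul_rpow hx.le hτ0.le, ← mul_one_sub, abs_mul,
      abs_of_pos (Real.rpow_pos_of_pos hx β)]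
  have h2 : |x - x * τ| = x * (1 - τ) := by
    rw [← mul_one_sub, abs_mul, abs_of_pos hx, abs_of_pos h1τ]
  have h3 : x ^ (β * p - s * p) = x ^ (β * p) * x / x ^ (1 + s * p) := by
    rw [Real.rpow_sub hx, Real.rpow_add hx, Real.rpow_one]
    field_simp
  rw [h1, h2, Real.mul_rpow (Real.rpow_pos_of_pos hx β).le (abs_nonneg _),
    Real.mul_rpow hx.le h1τ.le, ← Real.rpow_mul hx.le, h3]
  have hxsp : x ^ (1 + s * p) ≠ 0 := (Real.rpow_pos_of_pos hx _).ne'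
  have hτsp : (1 - τ) ^ (1 + s * p) ≠ 0 := (Real.rpow_pos_of_pos h1τ _).ne'
  field_simp

lemma calc2 (β p s : ℝ) {x τ : ℝ} (hx : 0 < x) (hτ0 : 0 < τ) (hτ1 : τ < 1) :
    x / τ ^ (2:ℕ) * (|x ^ β - (x * τ⁻¹) ^ β| ^ p / |x - x * τ⁻¹| ^ (1 + s * p)) =
      x ^ (β * p - s * p) *
        (|1 - τ ^ β| ^ p * τ ^ (s * p - β * p - 1) / (1 - τ) ^ (1 + s * p)) := by
  have h1τ : (0:ℝ) < 1 - τ := by linarith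
  have hτβ : (0:ℝ) < τ ^ β := Real.rpow_pos_of_pos hτ0 β
  have h1 : |x ^ β - (x * τ⁻¹) ^ β| = x ^ β * (τ ^ β)⁻¹ * |1 - τ ^ β| := by
    rw [Real.mul_rpow hx.le (inv_nonneg.mpr hτ0.le), Real.inv_rpow hτ0.le]
    rw [show x ^ β - x ^ β * (τ ^ β)⁻¹ = x ^ β * (τ ^ β)⁻¹ * (τ ^ β - 1) by
      field_simp]
    rw [abs_mul, abs_of_pos (by positivity), abs_sub_comm]
  have h2 : |x - x * τ⁻¹| = x * τ⁻¹ * (1 - τ) := by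
    rw [show x - x * τ⁻¹ = x * τ⁻¹ * (τ - 1) by field_simp, abs_mul,
      abs_of_pos (by positivity), abs_of_neg (by linarith), neg_sub]
  rw [h1, h2]
  rw [Real.mul_rpow (by positivity) (abs_nonneg _),
    Real.mul_rpow (Real.rpow_pos_of_pos hx β).le (by positivity),
    Real.mul_rpow (by positivity) h1τ.le,
    Real.mul_rpow hx.le (by positivity),
    Real.inv_rpow hτβ.le, ← Real.rpow_mul hτ0.le,
    Real.inv_rpow hτ0.le, ← Real.rpow_neg hτ0.le,
    ← Real.rpow_mul hx.le, ← Real.rpow_natCast τ 2]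
  have h3 : x ^ (β * p - s * p) = x ^ (β * p) * x / x ^ (1 + s * p) := by
    rw [Real.rpow_sub hx, Real.rpow_add hx, Real.rpow_one]
    field_simp
  have n1 : x ^ (β * p) ≠ 0 := (Real.rpow_pos_of_pos hx _).ne'
  have n2 : x ^ (s * p) ≠ 0 := (Real.rpow_pos_of_pos hx _).ne'
  have n3 : τ ^ (β * p) ≠ 0 := (Real.rpow_pos_of_pos hτ0 _).ne'
  have n4 : τ ^ (s * p) ≠ 0 := (Real.rpow_pos_of_pos hτ0 _).ne'
  have n5 : (1 - τ) ^ (1 + s * p) ≠ 0 := (Real.rpow_pos_of_pos h1τ _).ne'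
  have n6 : τ ≠ 0 := hτ0.ne'
  simp only [Real.rpow_sub hx, Real.rpow_sub hτ0, Real.rpow_add hx, Real.rpow_add hτ0,
    Real.rpow_one, Real.rpow_neg hτ0.le, Real.rpow_natCast]
  field_simp

lemma aux_meas (β p c q : ℝ) :
    Measurable (fun τ : ℝ => |1 - τ ^ β| ^ p * (1 + τ ^ c) / (1 - τ) ^ q) := by
  fun_prop

lemma rpow_int_Ioo {e a b : ℝ} (he : -1 < e) (hab : a ≤ b) :
    IntegrableOn (fun τ : ℝ => τ ^ e) (Ioo a b) :=
  (intervalIntegrable_iff_integrableOn_Ioo_of_le hab).1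
    (intervalIntegral.intervalIntegrable_rpow' he)

lemma one_sub_rpow_int {e : ℝ} (he : -1 < e) :
    IntegrableOn (fun τ : ℝ => (1 - τ) ^ e) (Ico (2⁻¹:ℝ) 1) := by
  have h := (intervalIntegral.intervalIntegrable_rpow' he (a := 0) (b := 2⁻¹)).comp_sub_left 1
  rw [show (1:ℝ) - 2⁻¹ = 2⁻¹ by norm_num, sub_zero] at h
  replace h := h.symm
  have h2 : IntegrableOn (fun τ : ℝ => (1 - τ) ^ e) (Ioo (2⁻¹:ℝ) 1) :=
    (intervalIntegrable_iff_integrableOn_Ioo_of_le (by norm_num : (2⁻¹:ℝ) ≤ 1)).1 h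
  exact h2.congr_set_ae Ioo_ae_eq_Ico.symm

lemma aux_int (p s β : ℝ) (hp : 1 < p) (hs0 : 0 < s) (hs1 : s < 1)
    (h1 : s * p - 1 < β * p) (h2 : β * p < s * p) (hβ1 : β < 1) :
    IntegrableOn
      (fun τ : ℝ => |1 - τ ^ β| ^ p * (1 + τ ^ (s * p - β * p - 1)) / (1 - τ) ^ (1 + s * p))
      (Set.Ioo (0:ℝ) 1) := by
  have hp0 : 0 < p := by linarith
  have hsp : 0 < s * p := by positivity
  have hβp : -1 < β * p := by linarith
  have hc : -1 < s * p - β * p - 1 := by linarith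
  have hq0 : 0 < 1 + s * p := by linarith
  rw [← Set.Ioo_union_Ico_eq_Ioo (by norm_num : (0:ℝ) < 2⁻¹) (by norm_num : (2⁻¹:ℝ) ≤ 1)]
  apply IntegrableOn.union
  · -- near 0
    have hmaj : IntegrableOn
        (fun τ : ℝ => 2 ^ p * 2 ^ (1 + s * p) *
          (1 + τ ^ (β * p) + τ ^ (s * p - β * p - 1) + τ ^ (s * p - 1))) (Ioo (0:ℝ) 2⁻¹) := by
      apply Integrable.const_mul
      have e1 := rpow_int_Ioo (a := 0) (b := 2⁻¹) hβp (by norm_num)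
      have e2 := rpow_int_Ioo (a := 0) (b := 2⁻¹) hc (by norm_num)
      have e3 := rpow_int_Ioo (a := 0) (b := 2⁻¹) (by linarith : (-1:ℝ) < s * p - 1) (by norm_num)
      have e0 : IntegrableOn (fun _ : ℝ => (1:ℝ)) (Ioo (0:ℝ) 2⁻¹) :=
        integrableOn_const (by rw [Real.volume_Ioo]; exact ENNReal.ofReal_ne_top)
      exact ((e0.add e1).add e2).add e3
    refine Integrable.mono hmaj ((aux_meas β p _ _).aestronglyMeasurable) ?_
    filter_upwards [ae_restrict_mem measurableSet_Ioo] with τ hτ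
    obtain ⟨hτ0, hτh⟩ := hτ
    have hτ1 : τ < 1 := by linarith
    have h1τ : (0:ℝ) < 1 - τ := by linarith
    -- bound on |1 - τ^β|^p
    have hτβ : (0:ℝ) < τ ^ β := Real.rpow_pos_of_pos hτ0 β
    have hA : |1 - τ ^ β| ^ p ≤ 2 ^ p * (1 + τ ^ (β * p)) := by
      have habs : |1 - τ ^ β| ≤ 1 + τ ^ β := by
        calc |1 - τ ^ β| ≤ |1| + |τ ^ β| := abs_sub _ _
        _ = 1 + τ ^ β := by rw [abs_one, abs_of_pos hτβ]
      have h' : |1 - τ ^ β| ^ p ≤ (1 + τ ^ β) ^ p :=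
        Real.rpow_le_rpow (abs_nonneg _) habs hp0.le
      rcases le_total (τ ^ β) 1 with hle | hle
      · calc |1 - τ ^ β| ^ p ≤ (1 + τ ^ β) ^ p := h'
          _ ≤ (2:ℝ) ^ p := Real.rpow_le_rpow (by positivity) (by linarith) hp0.le
          _ ≤ 2 ^ p * (1 + τ ^ (β * p)) := by
              nlinarith [Real.rpow_pos_of_pos hτ0 (β * p), Real.rpow_pos_of_pos two_pos p]
      · calc |1 - τ ^ β| ^ p ≤ (1 + τ ^ β) ^ p := h'
          _ ≤ (2 * τ ^ β) ^ p := Real.rpow_le_rpow (by positivity) (by linarith) hp0.le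
          _ = 2 ^ p * τ ^ (β * p) := by
              rw [Real.mul_rpow (by norm_num) hτβ.le, ← Real.rpow_mul hτ0.le]
          _ ≤ 2 ^ p * (1 + τ ^ (β * p)) := by
              nlinarith [Real.rpow_pos_of_pos two_pos p]
    have hD : ((1 - τ) ^ (1 + s * p))⁻¹ ≤ 2 ^ (1 + s * p) := by
      have hD' : ((2:ℝ) ^ (1 + s * p))⁻¹ ≤ (1 - τ) ^ (1 + s * p) := by
        rw [← Real.inv_rpow (by norm_num : (0:ℝ) ≤ 2)]
        exact Real.rpow_le_rpow (by norm_num) (by linarith) hq0.le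
      calc ((1 - τ) ^ (1 + s * p))⁻¹ ≤ (((2:ℝ) ^ (1 + s * p))⁻¹)⁻¹ := by
            apply inv_anti₀ (by positivity) hD'
        _ = 2 ^ (1 + s * p) := inv_inv _
    have hab : τ ^ (β * p) * τ ^ (s * p - β * p - 1) = τ ^ (s * p - 1) := by
      rw [← Real.rpow_add hτ0]; ring_nf
    have hg0 : |1 - τ ^ β| ^ p * (1 + τ ^ (s * p - β * p - 1)) / (1 - τ) ^ (1 + s * p) =
        |1 - τ ^ β| ^ p * (1 + τ ^ (s * p - β * p - 1)) * ((1 - τ) ^ (1 + s * p))⁻¹ :=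
      div_eq_mul_inv _ _
    have hτc : (0:ℝ) < τ ^ (s * p - β * p - 1) := Real.rpow_pos_of_pos hτ0 _
    have key : |1 - τ ^ β| ^ p * (1 + τ ^ (s * p - β * p - 1)) / (1 - τ) ^ (1 + s * p) ≤
        2 ^ p * 2 ^ (1 + s * p) *
          (1 + τ ^ (β * p) + τ ^ (s * p - β * p - 1) + τ ^ (s * p - 1)) := by
      rw [hg0]
      calc |1 - τ ^ β| ^ p * (1 + τ ^ (s * p - β * p - 1)) * ((1 - τ) ^ (1 + s * p))⁻¹
          ≤ (2 ^ p * (1 + τ ^ (β * p))) * (1 + τ ^ (s * p - β * p - 1)) * (2 ^ (1 + s * p)) := by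
            apply mul_le_mul (mul_le_mul hA le_rfl (by positivity) (by positivity)) hD
              (by positivity) (by positivity)
        _ = 2 ^ p * 2 ^ (1 + s * p) *
              (1 + τ ^ (β * p) + τ ^ (s * p - β * p - 1) + τ ^ (s * p - 1)) := by
            linear_combination (2:ℝ) ^ p * 2 ^ (1 + s * p) * hab
    have hgnn : (0:ℝ) ≤ |1 - τ ^ β| ^ p * (1 + τ ^ (s * p - β * p - 1)) / (1 - τ) ^ (1 + s * p) := by
      positivity
    have hmnn : (0:ℝ) ≤ 2 ^ p * 2 ^ (1 + s * p) *
        (1 + τ ^ (β * p) + τ ^ (s * p - β * p - 1) + τ ^ (s * p - 1)) := by positivity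
    rw [Real.norm_eq_abs, Real.norm_eq_abs, abs_of_nonneg hgnn, abs_of_nonneg hmnn]
    exact key
  · -- near 1
    have hpq : (-1:ℝ) < p - (1 + s * p) := by nlinarith
    set C := |β| * (2⁻¹:ℝ) ^ (β - 1) with hC
    have hC0 : 0 ≤ C := by positivity
    set E := (1:ℝ) + (2⁻¹:ℝ) ^ (s * p - β * p - 1) with hE
    have hE0 : (0:ℝ) < (2⁻¹:ℝ) ^ (s * p - β * p - 1) := by positivity
    have hmaj : IntegrableOn (fun τ : ℝ => C ^ p * (1 + E) * (1 - τ) ^ (p - (1 + s * p)))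
        (Ico (2⁻¹:ℝ) 1) := (one_sub_rpow_int hpq).const_mul _
    have hmvt : ∀ τ ∈ Icc (2⁻¹:ℝ) 1, |1 - τ ^ β| ≤ C * (1 - τ) := by
      intro τ hτ
      have h := Convex.norm_image_sub_le_of_norm_hasDerivWithin_le (C := C)
        (f := fun t : ℝ => t ^ β) (f' := fun t : ℝ => β * t ^ (β - 1)) (s := Icc (2⁻¹:ℝ) 1)
        (fun t ht => (Real.hasDerivAt_rpow_const
          (Or.inl (by have := ht.1; positivity : t ≠ 0))).hasDerivWithinAt)
        (fun t ht => ?_) (convex_Icc _ _) hτ (right_mem_Icc.2 (by norm_num))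
      · simpa [Real.one_rpow, Real.norm_eq_abs, abs_of_nonneg (by linarith [hτ.2] : (0:ℝ) ≤ 1 - τ)]
          using h
      · have ht0 : (0:ℝ) < t := lt_of_lt_of_le (by norm_num) ht.1
        have : t ^ (β - 1) ≤ (2⁻¹:ℝ) ^ (β - 1) :=
          Real.rpow_le_rpow_of_nonpos (by norm_num) ht.1 (by linarith)
        calc ‖β * t ^ (β - 1)‖ = |β| * t ^ (β - 1) := by
              rw [norm_mul, Real.norm_eq_abs, Real.norm_eq_abs,
                abs_of_pos (Real.rpow_pos_of_pos ht0 _)]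
          _ ≤ C := mul_le_mul_of_nonneg_left this (abs_nonneg β)
    refine Integrable.mono hmaj ((aux_meas β p _ _).aestronglyMeasurable) ?_
    filter_upwards [ae_restrict_mem measurableSet_Ico] with τ hτ
    obtain ⟨hτl, hτ1⟩ := hτ
    have hτ0 : (0:ℝ) < τ := lt_of_lt_of_le (by norm_num) hτl
    have h1τ : (0:ℝ) < 1 - τ := by linarith
    have hA : |1 - τ ^ β| ^ p ≤ C ^ p * (1 - τ) ^ p := by
      calc |1 - τ ^ β| ^ p ≤ (C * (1 - τ)) ^ p :=
            Real.rpow_le_rpow (abs_nonneg _) (hmvt τ ⟨hτl, hτ1.le⟩) hp0.le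
        _ = C ^ p * (1 - τ) ^ p := Real.mul_rpow hC0 h1τ.le
    have hE2 : τ ^ (s * p - β * p - 1) ≤ E := by
      rcases le_or_gt 0 (s * p - β * p - 1) with hc0 | hc0
      · have : τ ^ (s * p - β * p - 1) ≤ 1 := Real.rpow_le_one hτ0.le hτ1.le hc0
        rw [hE]; linarith
      · have : τ ^ (s * p - β * p - 1) ≤ (2⁻¹:ℝ) ^ (s * p - β * p - 1) :=
          Real.rpow_le_rpow_of_nonpos (by norm_num) hτl hc0.le
        rw [hE]; linarith
    have key : |1 - τ ^ β| ^ p * (1 + τ ^ (s * p - β * p - 1)) / (1 - τ) ^ (1 + s * p) ≤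
        C ^ p * (1 + E) * (1 - τ) ^ (p - (1 + s * p)) := by
      calc |1 - τ ^ β| ^ p * (1 + τ ^ (s * p - β * p - 1)) / (1 - τ) ^ (1 + s * p)
          ≤ (C ^ p * (1 - τ) ^ p) * (1 + E) / (1 - τ) ^ (1 + s * p) := by
            gcongr
        _ = C ^ p * (1 + E) * (1 - τ) ^ (p - (1 + s * p)) := by
            rw [Real.rpow_sub h1τ]
            have : (1 - τ) ^ (1 + s * p) ≠ 0 := (Real.rpow_pos_of_pos h1τ _).ne'
            field_simp
    have hgnn : (0:ℝ) ≤ |1 - τ ^ β| ^ p * (1 + τ ^ (s * p - β * p - 1)) / (1 - τ) ^ (1 + s * p) := by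
      positivity
    have hmnn : (0:ℝ) ≤ C ^ p * (1 + E) * (1 - τ) ^ (p - (1 + s * p)) := by positivity
    rw [Real.norm_eq_abs, Real.norm_eq_abs, abs_of_nonneg hgnn, abs_of_nonneg hmnn]
    exact key

lemma my_lintegral_image {s : Set ℝ} {f f' : ℝ → ℝ} (hs : MeasurableSet s)
    (hf' : ∀ x ∈ s, HasDerivWithinAt f (f' x) s x) (hf : Set.InjOn f s) (g : ℝ → ENNReal) :
    ∫⁻ x in f '' s, g x = ∫⁻ x in s, ENNReal.ofReal |f' x| * g (f x) := by
  simpa only [ContinuousLinearMap.det_toSpanSingleton] using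
    lintegral_image_eq_lintegral_abs_det_fderiv_mul volume hs
      (fun x hx => (hf' x hx).hasFDerivWithinAt) hf g

lemma subst1 {x : ℝ} (hx : 0 < x) (g : ℝ → ENNReal) :
    ∫⁻ y in Ioo 0 x, g y = ∫⁻ τ in Ioo (0:ℝ) 1, ENNReal.ofReal x * g (x * τ) := by
  have himg : (fun τ : ℝ => x * τ) '' Ioo 0 1 = Ioo 0 x := by
    ext y
    simp only [mem_image, mem_Ioo]
    constructor
    · rintro ⟨τ, ⟨h0, h1⟩, rfl⟩
      exact ⟨by positivity, by nlinarith⟩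
    · rintro ⟨h0, h1⟩
      exact ⟨y / x, ⟨by positivity, (div_lt_one hx).2 h1⟩, by field_simp⟩
  rw [← himg, my_lintegral_image measurableSet_Ioo
    (fun τ _ => by simpa using ((hasDerivAt_id τ).const_mul x).hasDerivWithinAt)
    (fun a _ b _ h => mul_left_cancel₀ hx.ne' h) g]
  refine setLIntegral_congr_fun measurableSet_Ioo (fun τ _ => ?_)
  rw [abs_of_pos hx]

lemma subst2 {x M : ℝ} (hx : 0 < x) (hxM : x < M) (g : ℝ → ENNReal) :
    ∫⁻ y in Ioo x M, g y =
      ∫⁻ τ in Ioo (x / M) 1, ENNReal.ofReal (x / τ ^ (2:ℕ)) * g (x * τ⁻¹) := by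
  have hM : 0 < M := hx.trans hxM
  have hxM0 : 0 < x / M := by positivity
  have himg : (fun τ : ℝ => x * τ⁻¹) '' Ioo (x / M) 1 = Ioo x M := by
    ext y
    simp only [mem_image, mem_Ioo]
    constructor
    · rintro ⟨τ, ⟨h0, h1⟩, rfl⟩
      have hτ0 : 0 < τ := hxM0.trans h0
      constructor
      · rw [lt_mul_iff_one_lt_right hx]
        exact (one_lt_inv₀ (hxM0.trans h0)).2 h1
      · rw [mul_inv_lt_iff₀ hτ0]
        rw [div_lt_iff₀ hM] at h0
        linarith [h0]
    · rintro ⟨h0, h1⟩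
      have hy0 : 0 < y := hx.trans h0
      refine ⟨x / y, ⟨div_lt_div_of_pos_left hx hy0 h1, (div_lt_one hy0).2 h0⟩, by field_simp⟩
  rw [← himg, my_lintegral_image measurableSet_Ioo
    (fun τ hτ => ((hasDerivAt_inv (hxM0.trans hτ.1).ne').const_mul x).hasDerivWithinAt)
    (fun a ha b hb h => inv_injective (mul_left_cancel₀ hx.ne' h)) g]
  refine setLIntegral_congr_fun measurableSet_Ioo (fun τ hτ => ?_)
  have hτ0 : 0 < τ := hxM0.trans hτ.1
  congr 1
  rw [mul_neg, abs_neg, abs_mul, abs_of_pos hx, abs_of_pos (by positivity), div_eq_mul_inv]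

theorem stmt_5 (p s M β : ℝ) (hp : 1 < p) (hs : s ∈ Set.Ioo (0:ℝ) 1) (hM : 0 < M)
    (hβ1 : (s * p - 1) / p < β) (hβ2 : β < s) :
    (∫⁻ x in Set.Ioo (0:ℝ) M, ∫⁻ y in Set.Ioo (0:ℝ) M,
        ENNReal.ofReal
          (|(if 0 < x then x ^ β else 0) - (if 0 < y then y ^ β else 0)| ^ p
            / |x - y| ^ (1 + s * p))) ≤
      ENNReal.ofReal
        ((∫ τ in Set.Ioo (0:ℝ) 1,
            |1 - τ ^ β| ^ p * (1 + τ ^ (s * p - β * p - 1)) / (1 - τ) ^ (1 + s * p)) *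
          M ^ (β * p - s * p + 1) / (β * p - s * p + 1)) := by
  obtain ⟨hs0, hs1⟩ := hs
  have hp0 : 0 < p := by linarith
  have hβp : s * p - 1 < β * p := by
    rw [div_lt_iff₀ hp0] at hβ1; linarith
  have hβps : β * p < s * p := by nlinarith
  have hβlt1 : β < 1 := hβ2.trans hs1
  have ha : (0:ℝ) < β * p - s * p + 1 := by linarith
  have hd : (-1:ℝ) < β * p - s * p := by linarith
  set c := s * p - β * p - 1 with hc
  set g : ℝ → ℝ := fun τ => |1 - τ ^ β| ^ p * (1 + τ ^ c) / (1 - τ) ^ (1 + s * p) with hg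
  set I : ℝ := ∫ τ in Set.Ioo (0:ℝ) 1, g τ with hIdef
  set L : ENNReal := ENNReal.ofReal I with hLdef
  have hgint : IntegrableOn g (Ioo (0:ℝ) 1) := aux_int p s β hp hs0 hs1 hβp hβps hβlt1
  have hgnn : 0 ≤ᵐ[volume.restrict (Ioo (0:ℝ) 1)] g := by
    filter_upwards [ae_restrict_mem measurableSet_Ioo] with τ hτ
    have h1τ : (0:ℝ) < 1 - τ := by linarith [hτ.2]
    have hτ0 : (0:ℝ) < τ := hτ.1
    positivity
  have hL : ∫⁻ τ in Ioo (0:ℝ) 1, ENNReal.ofReal (g τ) = L :=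
    (ofReal_integral_eq_lintegral_ofReal hgint hgnn).symm
  have hLne : L ≠ ⊤ := ENNReal.ofReal_ne_top
  -- inner bound
  have hinner : ∀ x ∈ Ioo (0:ℝ) M,
      (∫⁻ y in Set.Ioo (0:ℝ) M,
        ENNReal.ofReal
          (|(if 0 < x then x ^ β else 0) - (if 0 < y then y ^ β else 0)| ^ p
            / |x - y| ^ (1 + s * p))) ≤
      ENNReal.ofReal (x ^ (β * p - s * p)) * L := by
    intro x hx
    obtain ⟨hx0, hxM⟩ := hx
    have hif : (∫⁻ y in Set.Ioo (0:ℝ) M,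
        ENNReal.ofReal
          (|(if 0 < x then x ^ β else 0) - (if 0 < y then y ^ β else 0)| ^ p
            / |x - y| ^ (1 + s * p))) =
        ∫⁻ y in Set.Ioo (0:ℝ) M,
          ENNReal.ofReal (|x ^ β - y ^ β| ^ p / |x - y| ^ (1 + s * p)) :=
      setLIntegral_congr_fun measurableSet_Ioo
        (fun y hy => by rw [if_pos hx0, if_pos hy.1])
    rw [hif]
    rw [show Ioo (0:ℝ) M = Ioo 0 x ∪ Ico x M from (Ioo_union_Ico_eq_Ioo hx0 hxM.le).symm,
      lintegral_union measurableSet_Ico (Set.disjoint_left.2 fun y hy1 hy2 => absurd hy2.1 (not_le.2 hy1.2)),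
      setLIntegral_congr (α := ℝ) (Ioo_ae_eq_Ico (a := x) (b := M)).symm]
    -- part 1
    have hS1 : (∫⁻ y in Ioo (0:ℝ) x,
        ENNReal.ofReal (|x ^ β - y ^ β| ^ p / |x - y| ^ (1 + s * p))) =
        ENNReal.ofReal (x ^ (β * p - s * p)) *
          ∫⁻ τ in Ioo (0:ℝ) 1, ENNReal.ofReal (|1 - τ ^ β| ^ p / (1 - τ) ^ (1 + s * p)) := by
      rw [subst1 hx0]
      rw [← lintegral_const_mul' _ _ ENNReal.ofReal_ne_top]
      refine setLIntegral_congr_fun measurableSet_Ioo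
        (fun τ hτ => ?_)
      rw [← ENNReal.ofReal_mul hx0.le, calc1 β p s hx0 hτ.1 hτ.2,
        ENNReal.ofReal_mul (Real.rpow_pos_of_pos hx0 _).le]
    -- part 2
    have hS2 : (∫⁻ y in Ioo x M,
        ENNReal.ofReal (|x ^ β - y ^ β| ^ p / |x - y| ^ (1 + s * p))) ≤
        ENNReal.ofReal (x ^ (β * p - s * p)) *
          ∫⁻ τ in Ioo (0:ℝ) 1,
            ENNReal.ofReal (|1 - τ ^ β| ^ p * τ ^ c / (1 - τ) ^ (1 + s * p)) := by
      rw [subst2 hx0 hxM]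
      have hsub : Ioo (x / M) 1 ⊆ Ioo (0:ℝ) 1 :=
        Ioo_subset_Ioo (by positivity) le_rfl
      calc (∫⁻ τ in Ioo (x / M) 1, ENNReal.ofReal (x / τ ^ (2:ℕ)) *
            ENNReal.ofReal (|x ^ β - (x * τ⁻¹) ^ β| ^ p / |x - x * τ⁻¹| ^ (1 + s * p)))
          ≤ ∫⁻ τ in Ioo (x / M) 1, ENNReal.ofReal (x ^ (β * p - s * p)) *
            ENNReal.ofReal (|1 - τ ^ β| ^ p * τ ^ c / (1 - τ) ^ (1 + s * p)) := by
            refine setLIntegral_mono (by fun_prop) fun τ hτ => ?_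
            have hτ0 : 0 < τ := lt_of_le_of_lt (by positivity) hτ.1
            rw [← ENNReal.ofReal_mul (by positivity), calc2 β p s hx0 hτ0 hτ.2,
              ENNReal.ofReal_mul (Real.rpow_pos_of_pos hx0 _).le]
        _ ≤ ∫⁻ τ in Ioo (0:ℝ) 1, ENNReal.ofReal (x ^ (β * p - s * p)) *
            ENNReal.ofReal (|1 - τ ^ β| ^ p * τ ^ c / (1 - τ) ^ (1 + s * p)) :=
            lintegral_mono_set hsub
        _ = ENNReal.ofReal (x ^ (β * p - s * p)) *
            ∫⁻ τ in Ioo (0:ℝ) 1,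
              ENNReal.ofReal (|1 - τ ^ β| ^ p * τ ^ c / (1 - τ) ^ (1 + s * p)) :=
            lintegral_const_mul' _ _ ENNReal.ofReal_ne_top
    calc (∫⁻ y in Ioo (0:ℝ) x,
          ENNReal.ofReal (|x ^ β - y ^ β| ^ p / |x - y| ^ (1 + s * p))) +
        ∫⁻ y in Ioo x M,
          ENNReal.ofReal (|x ^ β - y ^ β| ^ p / |x - y| ^ (1 + s * p))
        ≤ ENNReal.ofReal (x ^ (β * p - s * p)) *
            ((∫⁻ τ in Ioo (0:ℝ) 1,
              ENNReal.ofReal (|1 - τ ^ β| ^ p / (1 - τ) ^ (1 + s * p))) +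
            ∫⁻ τ in Ioo (0:ℝ) 1,
              ENNReal.ofReal (|1 - τ ^ β| ^ p * τ ^ c / (1 - τ) ^ (1 + s * p))) := by
          rw [mul_add, hS1]
          exact add_le_add le_rfl hS2
      _ = ENNReal.ofReal (x ^ (β * p - s * p)) * L := by
          rw [← lintegral_add_left (by fun_prop)]
          rw [show (∫⁻ τ in Ioo (0:ℝ) 1,
              (ENNReal.ofReal (|1 - τ ^ β| ^ p / (1 - τ) ^ (1 + s * p)) +
               ENNReal.ofReal (|1 - τ ^ β| ^ p * τ ^ c / (1 - τ) ^ (1 + s * p)))) =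
              ∫⁻ τ in Ioo (0:ℝ) 1, ENNReal.ofReal (g τ) from
            setLIntegral_congr_fun measurableSet_Ioo
              (fun τ hτ => ?_), hL]
          have hτ0 : (0:ℝ) < τ := hτ.1
          have h1τ : (0:ℝ) < 1 - τ := by linarith [hτ.2]
          rw [← ENNReal.ofReal_add (by positivity) (by positivity)]
          congr 1
          rw [hg]
          have : (1 - τ) ^ (1 + s * p) ≠ 0 := (Real.rpow_pos_of_pos h1τ _).ne'
          field_simp
  -- outer integral
  calc (∫⁻ x in Set.Ioo (0:ℝ) M, ∫⁻ y in Set.Ioo (0:ℝ) M,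
        ENNReal.ofReal
          (|(if 0 < x then x ^ β else 0) - (if 0 < y then y ^ β else 0)| ^ p
            / |x - y| ^ (1 + s * p)))
      ≤ ∫⁻ x in Set.Ioo (0:ℝ) M, ENNReal.ofReal (x ^ (β * p - s * p)) * L :=
        setLIntegral_mono (by fun_prop) hinner
    _ = (∫⁻ x in Set.Ioo (0:ℝ) M, ENNReal.ofReal (x ^ (β * p - s * p))) * L :=
        lintegral_mul_const' _ _ hLne
    _ = ENNReal.ofReal (M ^ (β * p - s * p + 1) / (β * p - s * p + 1)) * L := by
        congr 1
        have hint : IntegrableOn (fun x : ℝ => x ^ (β * p - s * p)) (Ioo 0 M) :=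
          rpow_int_Ioo hd hM.le
        have hnn : 0 ≤ᵐ[volume.restrict (Ioo (0:ℝ) M)]
            fun x : ℝ => x ^ (β * p - s * p) := by
          filter_upwards [ae_restrict_mem measurableSet_Ioo] with x hx
          have := hx.1; positivity
        rw [← ofReal_integral_eq_lintegral_ofReal hint hnn]
        congr 1
        rw [← integral_Ioc_eq_integral_Ioo, ← intervalIntegral.integral_of_le hM.le,
          integral_rpow (Or.inl hd), Real.zero_rpow ha.ne', sub_zero]
    _ = ENNReal.ofReal (I * M ^ (β * p - s * p + 1) / (β * p - s * p + 1)) := by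
        rw [hLdef, ← ENNReal.ofReal_mul (by positivity)]
        congr 1
        ring
end

section
/- Let 1 < p < ∞, 0 < s < 1, and for 0 < t < 1 define g(β) = J_p(1 - t^β)(1 - t^{sp-1-β(p-1)}) for β ∈ (-1/(p-1), sp/(p-1)), where J_p(τ) = |τ|^{p-2}τ. Then g is differentiable on (-1/(p-1),0) ∪ (0, sp/(p-1)) and g'(β) ≥ 0 if and only if β ≤ (sp-1)/p. -/
open Real Filter

lemma aux_deriv (p s t : ℝ) (hp : 1 < p) (ht0 : 0 < t) (ht1 : t < 1)
    (β : ℝ) (hβ : β ≠ 0) :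
    HasDerivAt
      (fun b : ℝ => |1 - t ^ b| ^ (p - 2) * (1 - t ^ b)
        * (1 - t ^ (s * p - 1 - b * (p - 1)))) 
      ((p - 1) * Real.log t * |1 - t ^ β| ^ (p - 2)
        * (t ^ (s * p - 1 - β * (p - 1)) - t ^ β)) β := by
  have hL : Real.log t < 0 := Real.log_neg ht0 ht1
  have htb : HasDerivAt (fun b : ℝ => t ^ b) (t ^ β * Real.log t) β :=
    (Real.hasStrictDerivAt_const_rpow ht0 β).hasDerivAt
  have h4 : HasDerivAt (fun b : ℝ => s * p - 1 - b * (p - 1)) (-(p - 1)) β := by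
    simpa using ((hasDerivAt_id β).mul_const (p - 1)).const_sub (s * p - 1)
  have h5 : HasDerivAt (fun b : ℝ => t ^ (s * p - 1 - b * (p - 1)))
      (t ^ (s * p - 1 - β * (p - 1)) * Real.log t * (-(p - 1))) β :=
    (Real.hasStrictDerivAt_const_rpow ht0 (s * p - 1 - β * (p - 1))).hasDerivAt.comp β h4
  have h6 : HasDerivAt (fun b : ℝ => 1 - t ^ (s * p - 1 - b * (p - 1)))
      (-(t ^ (s * p - 1 - β * (p - 1)) * Real.log t * (-(p - 1)))) β := h5.const_sub 1
  rcases hβ.lt_or_gt with hneg | hpos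
  · -- β < 0 : t ^ b > 1
    have honelt : 1 < t ^ β := Real.one_lt_rpow_of_pos_of_lt_one_of_neg ht0 ht1 hneg
    have hC : (0:ℝ) < t ^ β - 1 := by linarith
    have hC' : HasDerivAt (fun b : ℝ => t ^ b - 1) (t ^ β * Real.log t) β := htb.sub_const 1
    have hF : HasDerivAt (fun b : ℝ => (t ^ b - 1) ^ (p - 1))
        (t ^ β * Real.log t * (p - 1) * (t ^ β - 1) ^ (p - 1 - 1)) β :=
      hC'.rpow_const (Or.inl hC.ne')
    have hG : HasDerivAt (fun b : ℝ =>
        -((t ^ b - 1) ^ (p - 1) * (1 - t ^ (s * p - 1 - b * (p - 1)))))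
        (-((t ^ β * Real.log t * (p - 1) * (t ^ β - 1) ^ (p - 1 - 1))
            * (1 - t ^ (s * p - 1 - β * (p - 1)))
          + (t ^ β - 1) ^ (p - 1)
            * -(t ^ (s * p - 1 - β * (p - 1)) * Real.log t * (-(p - 1))))) β :=
      (hF.mul h6).neg
    have heq : (fun b : ℝ => |1 - t ^ b| ^ (p - 2) * (1 - t ^ b)
          * (1 - t ^ (s * p - 1 - b * (p - 1))))
        =ᶠ[nhds β] (fun b : ℝ =>
          -((t ^ b - 1) ^ (p - 1) * (1 - t ^ (s * p - 1 - b * (p - 1))))) := by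
      filter_upwards [eventually_lt_nhds hneg] with b hb
      have h1 : 1 < t ^ b := Real.one_lt_rpow_of_pos_of_lt_one_of_neg ht0 ht1 hb
      have habs : |1 - t ^ b| = t ^ b - 1 := by rw [abs_of_nonpos (by linarith)]; ring
      rw [habs]
      have : (t ^ b - 1) ^ (p - 1) = (t ^ b - 1) ^ (p - 2) * (t ^ b - 1) := by
        rw [← Real.rpow_add_one (by nlinarith : (0:ℝ) < t ^ b - 1).ne' (p - 2)]; ring_nf
      rw [this]; ring
    have habsβ : |1 - t ^ β| = t ^ β - 1 := by rw [abs_of_nonpos (by linarith)]; ring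
    refine (hG.congr_of_eventuallyEq heq).congr_deriv ?_
    rw [habsβ]
    have hsplit : (t ^ β - 1) ^ (p - 1) = (t ^ β - 1) ^ (p - 2) * (t ^ β - 1) := by
      rw [← Real.rpow_add_one hC.ne' (p - 2)]; ring_nf
    have h21 : p - 1 - 1 = p - 2 := by ring
    rw [hsplit, h21]; ring
  · -- β > 0 : t ^ b < 1
    have hlt : t ^ β < 1 := Real.rpow_lt_one ht0.le ht1 hpos
    have hA : (0:ℝ) < 1 - t ^ β := by linarith
    have hA' : HasDerivAt (fun b : ℝ => 1 - t ^ b) (-(t ^ β * Real.log t)) β := htb.const_sub 1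
    have hF : HasDerivAt (fun b : ℝ => (1 - t ^ b) ^ (p - 1))
        (-(t ^ β * Real.log t) * (p - 1) * (1 - t ^ β) ^ (p - 1 - 1)) β :=
      hA'.rpow_const (Or.inl hA.ne')
    have hG : HasDerivAt (fun b : ℝ =>
        (1 - t ^ b) ^ (p - 1) * (1 - t ^ (s * p - 1 - b * (p - 1))))
        ((-(t ^ β * Real.log t) * (p - 1) * (1 - t ^ β) ^ (p - 1 - 1))
            * (1 - t ^ (s * p - 1 - β * (p - 1)))
          + (1 - t ^ β) ^ (p - 1)
            * -(t ^ (s * p - 1 - β * (p - 1)) * Real.log t * (-(p - 1)))) β :=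
      hF.mul h6
    have heq : (fun b : ℝ => |1 - t ^ b| ^ (p - 2) * (1 - t ^ b)
          * (1 - t ^ (s * p - 1 - b * (p - 1))))
        =ᶠ[nhds β] (fun b : ℝ =>
          (1 - t ^ b) ^ (p - 1) * (1 - t ^ (s * p - 1 - b * (p - 1)))) := by
      filter_upwards [eventually_gt_nhds hpos] with b hb
      have h1 : t ^ b < 1 := Real.rpow_lt_one ht0.le ht1 hb
      have habs : |1 - t ^ b| = 1 - t ^ b := abs_of_pos (by linarith)
      rw [habs]
      have : (1 - t ^ b) ^ (p - 1) = (1 - t ^ b) ^ (p - 2) * (1 - t ^ b) := by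
        rw [← Real.rpow_add_one (by nlinarith : (0:ℝ) < 1 - t ^ b).ne' (p - 2)]; ring_nf
      rw [this]
    have habsβ : |1 - t ^ β| = 1 - t ^ β := abs_of_pos hA
    refine (hG.congr_of_eventuallyEq heq).congr_deriv ?_
    rw [habsβ]
    have hsplit : (1 - t ^ β) ^ (p - 1) = (1 - t ^ β) ^ (p - 2) * (1 - t ^ β) := by
      rw [← Real.rpow_add_one hA.ne' (p - 2)]; ring_nf
    have h21 : p - 1 - 1 = p - 2 := by ring
    rw [hsplit, h21]; ring

theorem stmt_8 (p s t : ℝ) (hp : 1 < p) (hs : s ∈ Set.Ioo (0:ℝ) 1)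
    (ht : t ∈ Set.Ioo (0:ℝ) 1) :
    ∀ β ∈ Set.Ioo (-(1 / (p - 1))) (0:ℝ) ∪ Set.Ioo (0:ℝ) (s * p / (p - 1)),
      DifferentiableAt ℝ
        (fun b : ℝ => |1 - t ^ b| ^ (p - 2) * (1 - t ^ b)
          * (1 - t ^ (s * p - 1 - b * (p - 1)))) β ∧
      (0 ≤ deriv
        (fun b : ℝ => |1 - t ^ b| ^ (p - 2) * (1 - t ^ b)
          * (1 - t ^ (s * p - 1 - b * (p - 1)))) β ↔ β ≤ (s * p - 1) / p) := by
  intro β hβ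
  have hβ0 : β ≠ 0 := by rcases hβ with h | h <;> [exact h.2.ne; exact h.1.ne']
  obtain ⟨ht0, ht1⟩ := ht
  have hd := aux_deriv p s t hp ht0 ht1 β hβ0
  refine ⟨hd.differentiableAt, ?_⟩
  rw [hd.deriv]
  have hL : Real.log t < 0 := Real.log_neg ht0 ht1
  have habs : (0:ℝ) < |1 - t ^ β| ^ (p - 2) := by
    have : 1 - t ^ β ≠ 0 := by
      rcases hβ0.lt_or_gt with h | h
      · have := Real.one_lt_rpow_of_pos_of_lt_one_of_neg ht0 ht1 h; linarith
      · have := Real.rpow_lt_one ht0.le ht1 h; linarith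
    positivity
  have hc : (p - 1) * Real.log t * |1 - t ^ β| ^ (p - 2) < 0 := by
    have h1 : (p - 1) * Real.log t < 0 := mul_neg_of_pos_of_neg (by linarith) hL
    exact mul_neg_of_neg_of_pos h1 habs
  constructor
  · intro h
    have hle : t ^ (s * p - 1 - β * (p - 1)) - t ^ β ≤ 0 := by
      by_contra hcon
      push_neg at hcon
      nlinarith
    have : t ^ (s * p - 1 - β * (p - 1)) ≤ t ^ β := by linarith
    have hβle : β ≤ s * p - 1 - β * (p - 1) :=
      (Real.rpow_le_rpow_left_iff_of_base_lt_one ht0 ht1).mp this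
    rw [le_div_iff₀ (by linarith : (0:ℝ) < p)]
    nlinarith
  · intro h
    rw [le_div_iff₀ (by linarith : (0:ℝ) < p)] at h
    have hβle : β ≤ s * p - 1 - β * (p - 1) := by nlinarith
    have : t ^ (s * p - 1 - β * (p - 1)) ≤ t ^ β :=
      (Real.rpow_le_rpow_left_iff_of_base_lt_one ht0 ht1).mpr hβle
    nlinarith
end

section
/- Let 1 < p < ∞ and 0 < s < 1. For every β with -1/(p-1) < β < sp/(p-1) and every t ∈ (0,1), one has J_p(1-t^β)(1 - t^{sp-1-β(p-1)}) ≤ |1 - t^{(sp-1)/p}|^p, where J_p(τ) = |τ|^{p-2}τ. Consequently λ(β) ≤ λ((sp-1)/p) = 2∫_0^1 |1 - t^{(sp-1)/p}|^p/(1-t)^{1+sp} dt + 2/(sp), where λ(β) = 2∫_0^1 J_p(1-t^β)(1 - t^{sp-1-β(p-1)})/(1-t)^{1+sp} dt + 2/(sp). -/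
open Real MeasureTheory Set

lemma gm2 {θ u v : ℝ} (hθ0 : 0 < θ) (hθ1 : θ < 1) (hu0 : 0 ≤ u) (hv0 : 0 ≤ v)
    (hu1 : u ≤ 1) (hv1 : v ≤ 1) :
    (1-u)^θ * (1-v)^(1-θ) ≤ 1 - u^θ * v^(1-θ) := by
  have h1 := Real.geom_mean_le_arith_mean2_weighted (w₁:=θ) (w₂:=1-θ) (p₁:=u) (p₂:=v)
    hθ0.le (by linarith) hu0 hv0 (by ring)
  have h2 := Real.geom_mean_le_arith_mean2_weighted (w₁:=θ) (w₂:=1-θ) (p₁:=1-u) (p₂:=1-v)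
    hθ0.le (by linarith) (by linarith) (by linarith) (by ring)
  linarith

lemma key {p u v : ℝ} (hp : 1 < p) (hu : 0 < u) (hv : 0 < v) :
    |1-u| ^ (p-2) * (1-u) * (1-v) ≤ |1 - u^((p-1)/p) * v^(1/p)| ^ p := by
  have hp0 : (0:ℝ) < p := by linarith
  have hθ0 : 0 < (p-1)/p := div_pos (by linarith) hp0
  have hθ1 : (p-1)/p < 1 := by rw [div_lt_one hp0]; linarith
  have hθc : 1 - (p-1)/p = 1/p := by field_simp; ring
  have hrhs : (0:ℝ) ≤ |1 - u^((p-1)/p) * v^(1/p)| ^ p := rpow_nonneg (abs_nonneg _) p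
  have e1 : (p-1)/p*p = p-1 := by field_simp
  have e2 : 1/p*p = 1 := by field_simp
  rcases lt_trichotomy u 1 with hu1 | hu1 | hu1
  · rcases lt_trichotomy v 1 with hv1 | hv1 | hv1
    · -- u < 1, v < 1
      have h1u : (0:ℝ) < 1 - u := by linarith
      have h1v : (0:ℝ) < 1 - v := by linarith
      have hgm := gm2 hθ0 hθ1 hu.le hv.le hu1.le hv1.le
      rw [hθc] at hgm
      have hA : 0 < (1-u)^((p-1)/p) * (1-v)^(1/p) :=
        mul_pos (rpow_pos_of_pos h1u _) (rpow_pos_of_pos h1v _)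
      rw [abs_of_pos h1u, abs_of_pos (by linarith : (0:ℝ) < 1 - u^((p-1)/p) * v^(1/p))]
      have step := Real.rpow_le_rpow hA.le hgm hp0.le
      calc (1-u)^(p-2) * (1-u) * (1-v)
          = ((1-u)^((p-1)/p) * (1-v)^(1/p)) ^ p := by
            rw [Real.mul_rpow (rpow_nonneg h1u.le _) (rpow_nonneg h1v.le _),
              ← Real.rpow_mul h1u.le, ← Real.rpow_mul h1v.le, e1, e2, Real.rpow_one,
              show p-1 = (p-2)+1 by ring, Real.rpow_add_one' h1u.le (by linarith)]
        _ ≤ _ := step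
    · subst hv1; simpa using hrhs
    · have : |1-u| ^ (p-2) * (1-u) * (1-v) ≤ 0 :=
        mul_nonpos_of_nonneg_of_nonpos
          (mul_nonneg (rpow_nonneg (abs_nonneg _) _) (by linarith)) (by linarith)
      linarith
  · subst hu1; simpa using hrhs
  · rcases lt_trichotomy v 1 with hv1 | hv1 | hv1
    · have : |1-u| ^ (p-2) * (1-u) * (1-v) ≤ 0 :=
        mul_nonpos_of_nonpos_of_nonneg
          (mul_nonpos_of_nonneg_of_nonpos (rpow_nonneg (abs_nonneg _) _) (by linarith))
          (by linarith)
      linarith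
    · subst hv1; simpa using hrhs
    · -- 1 < u, 1 < v
      have hui : u⁻¹ < 1 := inv_lt_one_of_one_lt₀ hu1
      have hvi : v⁻¹ < 1 := inv_lt_one_of_one_lt₀ hv1
      have hui0 : (0:ℝ) < u⁻¹ := by positivity
      have hvi0 : (0:ℝ) < v⁻¹ := by positivity
      have hgm := gm2 hθ0 hθ1 hui0.le hvi0.le hui.le hvi.le
      rw [hθc] at hgm
      set c := u^((p-1)/p) * v^(1/p) with hc
      have hc0 : 0 < c := mul_pos (rpow_pos_of_pos hu _) (rpow_pos_of_pos hv _)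
      have hcinv : (u⁻¹)^((p-1)/p) * (v⁻¹)^(1/p) = c⁻¹ := by
        rw [Real.inv_rpow hu.le, Real.inv_rpow hv.le, hc, mul_inv]
      rw [hcinv] at hgm
      -- multiply by c
      have hmul : c * ((1-u⁻¹)^((p-1)/p) * (1-v⁻¹)^(1/p)) ≤ c * (1 - c⁻¹) :=
        mul_le_mul_of_nonneg_left hgm hc0.le
      have hrw : c * ((1-u⁻¹)^((p-1)/p) * (1-v⁻¹)^(1/p)) = (u-1)^((p-1)/p) * (v-1)^(1/p) := by
        rw [hc]
        have h1 : u^((p-1)/p) * (1-u⁻¹)^((p-1)/p) = (u-1)^((p-1)/p) := by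
          rw [← Real.mul_rpow hu.le (by linarith)]
          congr 1
          field_simp
        have h2 : v^(1/p) * (1-v⁻¹)^(1/p) = (v-1)^(1/p) := by
          rw [← Real.mul_rpow hv.le (by linarith)]
          congr 1
          field_simp
        calc u^((p-1)/p) * v^(1/p) * ((1-u⁻¹)^((p-1)/p) * (1-v⁻¹)^(1/p))
            = (u^((p-1)/p) * (1-u⁻¹)^((p-1)/p)) * (v^(1/p) * (1-v⁻¹)^(1/p)) := by ring
          _ = (u-1)^((p-1)/p) * (v-1)^(1/p) := by rw [h1, h2]
      have hrw2 : c * (1 - c⁻¹) = c - 1 := by field_simp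
      rw [hrw, hrw2] at hmul
      have hA : 0 < (u-1)^((p-1)/p) * (v-1)^(1/p) :=
        mul_pos (rpow_pos_of_pos (by linarith) _) (rpow_pos_of_pos (by linarith) _)
      have hc1 : 1 < c := by linarith
      have habs1 : |1-u| = u-1 := by rw [abs_of_neg (by linarith)]; ring
      have habs2 : |1-c| = c-1 := by rw [abs_of_neg (by linarith)]; ring
      rw [habs1, habs2]
      have step := Real.rpow_le_rpow hA.le hmul hp0.le
      calc (u-1)^(p-2) * (1-u) * (1-v)
          = ((u-1)^((p-1)/p) * (v-1)^(1/p)) ^ p := by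
            rw [Real.mul_rpow (rpow_nonneg (by linarith) _) (rpow_nonneg (by linarith) _),
              ← Real.rpow_mul (by linarith : (0:ℝ) ≤ u-1),
              ← Real.rpow_mul (by linarith : (0:ℝ) ≤ v-1), e1, e2, Real.rpow_one,
              show p-1 = (p-2)+1 by ring,
              Real.rpow_add_one' (by linarith : (0:ℝ) ≤ u-1) (by linarith)]
            ring
        _ ≤ _ := step


lemma bern {t α : ℝ} (ht0 : 0 < t) (ht1 : t < 1) (hα : 0 ≤ α) :
    1 - t^α ≤ (1+α) * (1-t) := by
  rcases le_or_gt α 1 with h | h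
  · have h1 : t^(1:ℝ) ≤ t^α := Real.rpow_le_rpow_of_exponent_ge ht0 ht1.le h
    rw [Real.rpow_one] at h1
    nlinarith
  · have := one_add_mul_self_le_rpow_one_add (s := t-1) (by linarith) h.le
    have h2 : (1 + (t-1)) = t := by ring
    rw [h2] at this
    nlinarith

lemma absb {t α : ℝ} (ht0 : 0 < t) (ht1 : t < 1) :
    |1 - t^α| ≤ (1+|α|) * t^(-|α|) * (1-t) := by
  rcases le_or_gt 0 α with hα | hα
  · rw [abs_of_nonneg hα, abs_of_nonneg (by nlinarith [Real.rpow_le_one ht0.le ht1.le hα] : (0:ℝ) ≤ 1 - t^α)]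
    have h1 : 1 - t^α ≤ (1+α)*(1-t) := bern ht0 ht1 hα
    have h2 : (1:ℝ) ≤ t^(-α) := by
      calc (1:ℝ) = t^(0:ℝ) := (Real.rpow_zero t).symm
        _ ≤ t^(-α) := Real.rpow_le_rpow_of_exponent_ge ht0 ht1.le (by linarith)
    nlinarith [mul_nonneg (mul_nonneg (by linarith : (0:ℝ) ≤ 1+α)
      (by linarith : (0:ℝ) ≤ 1-t)) (by linarith : (0:ℝ) ≤ t^(-α)-1)]
  · rw [abs_of_neg hα]
    have hgt : 1 < t^α := by
      rw [Real.one_lt_rpow_iff_of_pos ht0]; right; exact ⟨ht1, hα⟩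
    rw [abs_of_neg (by linarith : 1 - t^α < 0)]
    have hfact : -(1 - t^α) = t^(-(-α)) * (1 - t^(-α)) := by
      rw [mul_sub, ← Real.rpow_add ht0]
      simp [Real.rpow_zero]
    rw [hfact]
    have hb := bern ht0 ht1 (by linarith : (0:ℝ) ≤ -α)
    have hpos : (0:ℝ) ≤ t^(-(-α)) := Real.rpow_nonneg ht0.le _
    calc t^(-(-α)) * (1 - t^(-α)) ≤ t^(-(-α)) * ((1+(-α))*(1-t)) :=
          mul_le_mul_of_nonneg_left hb hpos
      _ = (1+(-α)) * t^(-(-α)) * (1-t) := by ring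

lemma absb2 {t α : ℝ} (ht0 : 1/2 ≤ t) (ht1 : t < 1) :
    |1 - t^α| ≤ (1+|α|) * 2^|α| * (1-t) := by
  have h0 : (0:ℝ) < t := by linarith
  have h2 : t^(-|α|) ≤ 2^|α| := by
    calc t^(-|α|) ≤ (1/2:ℝ)^(-|α|) :=
          Real.rpow_le_rpow_of_nonpos (by norm_num) ht0 (neg_nonpos.mpr (abs_nonneg α))
      _ = 2^|α| := by
          rw [one_div, Real.inv_rpow (by norm_num), Real.rpow_neg (by norm_num), inv_inv]
  calc |1 - t^α| ≤ (1+|α|) * t^(-|α|) * (1-t) := absb h0 ht1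
    _ ≤ (1+|α|) * 2^|α| * (1-t) :=
        mul_le_mul_of_nonneg_right
          (mul_le_mul_of_nonneg_left h2 (by positivity)) (by linarith)

lemma pow1add {x r : ℝ} (hx : 0 ≤ x) (hr : 0 ≤ r) : (1+x)^r ≤ 2^r * (1 + x^r) := by
  have h1 : 1 + x ≤ 2 * max 1 x := by
    rcases le_total x 1 with h | h
    · simp [max_eq_left h]; linarith
    · simp [max_eq_right h]; linarith
  calc (1+x)^r ≤ (2 * max 1 x)^r := Real.rpow_le_rpow (by linarith) h1 hr
    _ = 2^r * (max 1 x)^r := Real.mul_rpow (by norm_num) (le_max_of_le_left zero_le_one)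
    _ ≤ 2^r * (1 + x^r) := by
        have h2 : (max 1 x)^r ≤ 1 + x^r := by
          rcases le_total x 1 with h | h
          · rw [max_eq_left h, Real.one_rpow]
            nlinarith [Real.rpow_nonneg hx r]
          · rw [max_eq_right h]
            linarith [Real.rpow_nonneg hx r]
        nlinarith [Real.rpow_nonneg (by norm_num : (0:ℝ) ≤ 2) r]

lemma I1 {e : ℝ} (he : -1 < e) : IntegrableOn (fun t => t^e) (Ioc (0:ℝ) (1/2)) := by
  have := intervalIntegral.intervalIntegrable_rpow' (r := e) he (a := 0) (b := 1/2)
  rwa [intervalIntegrable_iff_integrableOn_Ioc_of_le (by norm_num)] at this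

lemma I2 {e : ℝ} (he : -1 < e) : IntegrableOn (fun t => (1-t)^e) (Ioo (1/2:ℝ) 1) := by
  have h := (intervalIntegral.intervalIntegrable_rpow' (r := e) he (a := 0) (b := 1/2)).comp_sub_left 1
  simp only [show (1:ℝ) - 0 = 1 by norm_num, show (1:ℝ) - 1/2 = 1/2 by norm_num] at h
  have h2 := h.symm
  rw [intervalIntegrable_iff_integrableOn_Ioc_of_le (by norm_num)] at h2
  exact h2.mono_set Ioo_subset_Ioc_self

lemma INT {h : ℝ → ℝ} (hm : Measurable h) {C0 C1 e1 e2 e3 e4 : ℝ}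
    (he1 : -1 < e1) (he2 : -1 < e2) (he3 : -1 < e3) (he4 : -1 < e4)
    (hb0 : ∀ t ∈ Ioc (0:ℝ) (1/2), |h t| ≤ C0 * (1 + t^e1 + t^e2 + t^e3))
    (hb1 : ∀ t ∈ Ioo (1/2:ℝ) 1, |h t| ≤ C1 * (1-t)^e4) :
    IntegrableOn h (Ioo 0 1) := by
  have H0 : IntegrableOn h (Ioc 0 (1/2)) := by
    apply Integrable.mono' (g := fun t => C0 * (1 + t^e1 + t^e2 + t^e3))
      ?_ hm.aestronglyMeasurable.restrict ?_
    · apply Integrable.const_mul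
      have hc : IntegrableOn (fun _ : ℝ => (1:ℝ)) (Ioc 0 (1/2)) := by
        apply (integrableOn_const_iff (C := (1:ℝ)) (by simp)).mpr; right; simp [Real.volume_Ioc]
      have hsum := (hc.add (I1 he1)).add ((I1 he2).add (I1 he3))
      exact hsum.congr (Filter.Eventually.of_forall fun t => by
        simp [Pi.add_apply]; ring)
    · filter_upwards [ae_restrict_mem measurableSet_Ioc] with t ht
      simpa [Real.norm_eq_abs] using hb0 t ht
  have H1 : IntegrableOn h (Ioo (1/2) 1) := by
    apply Integrable.mono' (g := fun t => C1 * (1-t)^e4)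
      ?_ hm.aestronglyMeasurable.restrict ?_
    · exact (I2 he4).const_mul _
    · filter_upwards [ae_restrict_mem measurableSet_Ioo] with t ht
      simpa [Real.norm_eq_abs] using hb1 t ht
  have : Ioo (0:ℝ) 1 ⊆ Ioc 0 (1/2) ∪ Ioo (1/2) 1 := by
    intro t ht
    rcases le_or_gt t (1/2) with h | h
    · exact Or.inl ⟨ht.1, h⟩
    · exact Or.inr ⟨h, ht.2⟩
  exact (H0.union H1).mono_set this

lemma numabs {x y q : ℝ} (hq : q + 1 ≠ 0) :
    |(|1-x|^q * (1-x) * (1-y))| = |1-x|^(q+1) * |1-y| := by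
  rw [abs_mul, abs_mul, abs_of_nonneg (Real.rpow_nonneg (abs_nonneg _) q),
    Real.rpow_add_one' (abs_nonneg _) hq]

lemma fint {p s β : ℝ} (hp : 1 < p) (hs0 : 0 < s) (hs1 : s < 1)
    (he1 : -1 < β*(p-1)) (he2 : -1 < s*p-1-β*(p-1)) :
    IntegrableOn (fun t =>
      |1 - t^β|^(p-2) * (1 - t^β) * (1 - t^(s*p-1-β*(p-1))) / (1-t)^(1+s*p))
      (Ioo (0:ℝ) 1) := by
  set b := s*p-1-β*(p-1) with hb
  have hsp : 0 < s*p := mul_pos hs0 (by linarith)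
  have hp1 : (0:ℝ) < p - 1 := by linarith
  have hpm1 : p - 2 + 1 ≠ 0 := by intro h; linarith
  apply INT (C0 := 2^(1+s*p) * 2^(p-1)) (C1 := ((1+|β|)*2^|β|)^(p-1) * ((1+|b|)*2^|b|))
    (e1 := β*(p-1)) (e2 := b) (e3 := s*p-1) (e4 := p-1-s*p)
    (by fun_prop) he1 he2 (by linarith) (by nlinarith)
  · -- bound on Ioc 0 (1/2)
    intro t ht
    obtain ⟨ht0, ht2⟩ := ht
    have ht1 : t < 1 := by linarith
    have hden : (0:ℝ) < (1-t)^(1+s*p) := Real.rpow_pos_of_pos (by linarith) _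
    rw [abs_div, numabs hpm1, abs_of_pos hden, show p - 2 + 1 = p - 1 by ring]
    have hdenlb : (2:ℝ)^(-(1+s*p)) ≤ (1-t)^(1+s*p) := by
      have : ((2:ℝ))^(-(1+s*p)) = (1/2:ℝ)^(1+s*p) := by
        rw [one_div, Real.inv_rpow (by norm_num), Real.rpow_neg (by norm_num)]
      rw [this]
      exact Real.rpow_le_rpow (by norm_num) (by linarith) (by linarith)
    have hnum0 : (0:ℝ) ≤ |1-t^β|^(p-1) * |1-t^b| :=
      mul_nonneg (Real.rpow_nonneg (abs_nonneg _) _) (abs_nonneg _)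
    have h2pos : (0:ℝ) < (2:ℝ)^(-(1+s*p)) := Real.rpow_pos_of_pos (by norm_num) _
    have step1 : |1-t^β|^(p-1) * |1-t^b| / (1-t)^(1+s*p)
        ≤ |1-t^β|^(p-1) * |1-t^b| * 2^(1+s*p) := by
      calc |1-t^β|^(p-1) * |1-t^b| / (1-t)^(1+s*p)
          ≤ |1-t^β|^(p-1) * |1-t^b| / (2:ℝ)^(-(1+s*p)) :=
            div_le_div_of_nonneg_left hnum0 h2pos hdenlb
        _ = |1-t^β|^(p-1) * |1-t^b| * 2^(1+s*p) := by
            rw [div_eq_mul_inv, ← Real.rpow_neg (by norm_num), neg_neg]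
    have hx : (0:ℝ) < t^β := Real.rpow_pos_of_pos ht0 _
    have hy : (0:ℝ) < t^b := Real.rpow_pos_of_pos ht0 _
    have h1 : |1-t^β| ≤ 1 + t^β := by rw [abs_le]; constructor <;> linarith
    have h2 : |1-t^b| ≤ 1 + t^b := by rw [abs_le]; constructor <;> linarith
    have h1' : |1-t^β|^(p-1) ≤ 2^(p-1) * (1 + t^(β*(p-1))) := by
      calc |1-t^β|^(p-1) ≤ (1+t^β)^(p-1) :=
            Real.rpow_le_rpow (abs_nonneg _) h1 (by linarith)
        _ ≤ 2^(p-1) * (1 + (t^β)^(p-1)) := pow1add hx.le (by linarith)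
        _ = 2^(p-1) * (1 + t^(β*(p-1))) := by rw [← Real.rpow_mul ht0.le]
    have hprod : |1-t^β|^(p-1) * |1-t^b|
        ≤ 2^(p-1) * (1 + t^(β*(p-1))) * (1 + t^b) := by
      apply mul_le_mul h1' h2 (abs_nonneg _)
      positivity
    have hexpand : 2^(p-1) * (1 + t^(β*(p-1))) * (1 + t^b)
        = 2^(p-1) * (1 + t^(β*(p-1)) + t^b + t^(s*p-1)) := by
      have : t^(β*(p-1)) * t^b = t^(s*p-1) := by
        rw [← Real.rpow_add ht0]; congr 1; rw [hb]; ring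
      rw [← this]; ring
    calc |1-t^β|^(p-1) * |1-t^b| / (1-t)^(1+s*p)
        ≤ |1-t^β|^(p-1) * |1-t^b| * 2^(1+s*p) := step1
      _ ≤ 2^(p-1) * (1 + t^(β*(p-1)) + t^b + t^(s*p-1)) * 2^(1+s*p) := by
          rw [← hexpand]
          exact mul_le_mul_of_nonneg_right hprod (Real.rpow_nonneg (by norm_num) _)
      _ = 2^(1+s*p) * 2^(p-1) * (1 + t^(β*(p-1)) + t^b + t^(s*p-1)) := by ring
  · -- bound on Ioo (1/2) 1
    intro t ht
    obtain ⟨ht2, ht1⟩ := ht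
    have ht0 : (0:ℝ) < t := by linarith
    have h1t : (0:ℝ) < 1 - t := by linarith
    have hden : (0:ℝ) < (1-t)^(1+s*p) := Real.rpow_pos_of_pos h1t _
    rw [abs_div, numabs hpm1, abs_of_pos hden, show p - 2 + 1 = p - 1 by ring]
    set A := (1+|β|)*2^|β| with hA
    set B := (1+|b|)*2^|b| with hB
    have hA0 : (0:ℝ) ≤ A := by positivity
    have hB0 : (0:ℝ) ≤ B := by positivity
    have h1' : |1-t^β|^(p-1) ≤ A^(p-1) * (1-t)^(p-1) := by
      calc |1-t^β|^(p-1) ≤ (A*(1-t))^(p-1) :=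
            Real.rpow_le_rpow (abs_nonneg _) (absb2 ht2.le ht1) (by linarith)
        _ = A^(p-1) * (1-t)^(p-1) := Real.mul_rpow hA0 h1t.le
    have h2' : |1-t^b| ≤ B * (1-t) := absb2 ht2.le ht1
    have hnum : |1-t^β|^(p-1) * |1-t^b| ≤ A^(p-1) * (1-t)^(p-1) * (B * (1-t)) :=
      mul_le_mul h1' h2' (abs_nonneg _) (by positivity)
    calc |1-t^β|^(p-1) * |1-t^b| / (1-t)^(1+s*p)
        ≤ A^(p-1) * (1-t)^(p-1) * (B * (1-t)) / (1-t)^(1+s*p) :=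
          div_le_div_of_nonneg_right hnum hden.le
      _ = A^(p-1) * B * ((1-t)^(p-1) * (1-t) / (1-t)^(1+s*p)) := by ring
      _ = A^(p-1) * B * (1-t)^(p-1-s*p) := by
          rw [← Real.rpow_add_one' h1t.le (by intro h; simp at h; linarith),
            ← Real.rpow_sub h1t]
          congr 1
          ring


lemma part1 {p s β t : ℝ} (hp : 1 < p) (ht0 : 0 < t) (ht1 : t < 1) :
    |1 - t^β|^(p-2) * (1 - t^β) * (1 - t^(s*p-1-β*(p-1))) ≤ |1 - t^((s*p-1)/p)|^p := by
  have hpne : p ≠ 0 := by intro h; rw [h] at hp; norm_num at hp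
  have h := key hp (Real.rpow_pos_of_pos ht0 β) (Real.rpow_pos_of_pos ht0 (s*p-1-β*(p-1)))
  have hrw : (t^β)^((p-1)/p) * (t^(s*p-1-β*(p-1)))^(1/p) = t^((s*p-1)/p) := by
    rw [← Real.rpow_mul ht0.le, ← Real.rpow_mul ht0.le, ← Real.rpow_add ht0]
    congr 1
    field_simp
    ring
  rwa [hrw] at h

lemma absp {x p : ℝ} (hp : 1 < p) :
    |1-x|^(p-2) * (1-x) * (1-x) = |1-x|^p := by
  have h1 : (1-x) * (1-x) = |1-x| * |1-x| := (abs_mul_abs_self _).symm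
  have hne2 : (p-2) + 1 ≠ 0 := by intro h; linarith
  have hne1 : ((p-2) + 1) + 1 ≠ 0 := by intro h; linarith
  have e : |1-x|^(((p-2)+1)+1) = |1-x|^(p-2) * |1-x| * |1-x| := by
    rw [Real.rpow_add_one' (abs_nonneg _) hne1, Real.rpow_add_one' (abs_nonneg _) hne2]
  have e2 : ((p-2)+1)+1 = p := by ring
  calc |1-x|^(p-2) * (1-x) * (1-x) = |1-x|^(p-2) * |1-x| * |1-x| := by
        rw [mul_assoc, h1]; ring
    _ = |1-x|^p := by rw [← e, e2]

theorem stmt_9 (p s : ℝ) (hp : 1 < p) (hs : s ∈ Set.Ioo (0:ℝ) 1) :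
    (∀ β ∈ Set.Ioo (-(1 / (p - 1))) (s * p / (p - 1)), ∀ t ∈ Set.Ioo (0:ℝ) 1,
      |1 - t ^ β| ^ (p - 2) * (1 - t ^ β) * (1 - t ^ (s * p - 1 - β * (p - 1)))
        ≤ |1 - t ^ ((s * p - 1) / p)| ^ p) ∧
    (∀ β ∈ Set.Ioo (-(1 / (p - 1))) (s * p / (p - 1)),
      2 * (∫ t in Set.Ioo (0:ℝ) 1,
          |1 - t ^ β| ^ (p - 2) * (1 - t ^ β) * (1 - t ^ (s * p - 1 - β * (p - 1)))
            / (1 - t) ^ (1 + s * p)) + 2 / (s * p) ≤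
        2 * (∫ t in Set.Ioo (0:ℝ) 1,
          |1 - t ^ ((s * p - 1) / p)| ^ p / (1 - t) ^ (1 + s * p)) + 2 / (s * p)) := by
  obtain ⟨hs0, hs1⟩ := hs
  have hp1 : (0:ℝ) < p - 1 := by linarith
  have hsp : 0 < s*p := mul_pos hs0 (by linarith)
  constructor
  · intro β _ t ht
    exact part1 hp ht.1 ht.2
  · intro β hβ
    obtain ⟨hβ1, hβ2⟩ := hβ
    have he1 : -1 < β*(p-1) := by
      have hmul : -(1/(p-1))*(p-1) < β*(p-1) := mul_lt_mul_of_pos_right hβ1 hp1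
      have hone : (1/(p-1))*(p-1) = 1 := by field_simp
      nlinarith
    have he2 : -1 < s*p-1-β*(p-1) := by
      have hmul : β*(p-1) < (s*p/(p-1))*(p-1) := mul_lt_mul_of_pos_right hβ2 hp1
      have hone : (s*p/(p-1))*(p-1) = s*p := by field_simp
      nlinarith
    have hg1 : -1 < ((s*p-1)/p)*(p-1) := by
      rw [div_mul_eq_mul_div, lt_div_iff₀ (by linarith : (0:ℝ) < p)]
      nlinarith
    have hg2 : -1 < s*p-1-((s*p-1)/p)*(p-1) := by
      rw [div_mul_eq_mul_div]
      rw [show s*p-1-(s*p-1)*(p-1)/p = (s*p-1)/p by field_simp; ring]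
      rw [lt_div_iff₀ (by linarith : (0:ℝ) < p)]
      nlinarith
    have hF : IntegrableOn (fun t =>
        |1 - t^β|^(p-2) * (1 - t^β) * (1 - t^(s*p-1-β*(p-1))) / (1-t)^(1+s*p))
        (Ioo (0:ℝ) 1) := fint hp hs0 hs1 he1 he2
    have hGaux := fint (β := (s*p-1)/p) hp hs0 hs1 hg1 hg2
    have hG : IntegrableOn (fun t =>
        |1 - t^((s*p-1)/p)|^p / (1-t)^(1+s*p)) (Ioo (0:ℝ) 1) := by
      apply hGaux.congr (Filter.Eventually.of_forall fun t => ?_)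
      have hexp : s*p-1-((s*p-1)/p)*(p-1) = (s*p-1)/p := by field_simp; ring
      simp only [hexp]
      rw [absp hp]
    have hmono := setIntegral_mono_on hF hG measurableSet_Ioo (fun t ht => by
      have hden : (0:ℝ) < (1-t)^(1+s*p) := Real.rpow_pos_of_pos (by linarith [ht.2]) _
      exact div_le_div_of_nonneg_right (part1 hp ht.1 ht.2) hden.le)
    linarith
end

section
/- Let 1 < p < ∞ and s = 1/p (so that sp = 1). Define λ(β) = 2∫_0^1 J_p(1-t^β)(1 - t^{-β(p-1)})/(1-t)^2 dt + 2, where J_p(τ) = |τ|^{p-2}τ, for -1/(p-1) < β < 1/(p-1). Then λ is an even function: λ(-β) = λ(β) for all β ∈ (-1/(p-1), 1/(p-1)). -/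
lemma key_aux (p a : ℝ) (ha : 0 < a) :
    |1 - a⁻¹| ^ (p - 2) * (1 - a⁻¹) * (1 - a ^ (p - 1))
      = |1 - a| ^ (p - 2) * (1 - a) * (1 - (a ^ (p - 1))⁻¹) := by
  have ha' : (0:ℝ) < a⁻¹ := by positivity
  have h1 : 1 - a⁻¹ = -(a⁻¹ * (1 - a)) := by field_simp; ring
  have h3 : (a ^ (p - 1))⁻¹ = a⁻¹ ^ (p - 1) := (Real.inv_rpow ha.le _).symm
  have h4 : a⁻¹ ^ (p - 2) * a⁻¹ = a⁻¹ ^ (p - 1) := by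
    nth_rewrite 2 [show a⁻¹ = a⁻¹ ^ (1:ℝ) by rw [Real.rpow_one]]
    rw [← Real.rpow_add ha']; ring_nf
  have h5 : a⁻¹ ^ (p - 1) * a ^ (p - 1) = 1 := by
    rw [← Real.mul_rpow ha'.le ha.le, inv_mul_cancel₀ ha.ne', Real.one_rpow]
  have h5' : a⁻¹ ^ (p - 2) * a⁻¹ * a ^ (p - 1) = 1 := by rw [h4]; exact h5
  rw [h1, abs_neg, abs_mul, abs_of_pos ha',
    Real.mul_rpow ha'.le (abs_nonneg _), h3, ← h4]
  linear_combination (|1 - a| ^ (p - 2) * (1 - a)) * h5'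

theorem stmt_11 (p s : ℝ) (hp : 1 < p) (hsp : s = 1 / p) (β : ℝ)
    (hβ : β ∈ Set.Ioo (-(1 / (p - 1))) (1 / (p - 1))) :
    (fun b : ℝ => 2 * (∫ t in Set.Ioo (0:ℝ) 1,
        (|1 - t ^ b| ^ (p - 2) * (1 - t ^ b)) * (1 - t ^ (-(b * (p - 1))))
          / (1 - t) ^ (1 + s * p)) + 2 / (s * p)) (-β)
    = (fun b : ℝ => 2 * (∫ t in Set.Ioo (0:ℝ) 1,
        (|1 - t ^ b| ^ (p - 2) * (1 - t ^ b)) * (1 - t ^ (-(b * (p - 1))))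
          / (1 - t) ^ (1 + s * p)) + 2 / (s * p)) β := by
  simp only
  congr 1
  congr 1
  apply MeasureTheory.setIntegral_congr_fun measurableSet_Ioo
  intro t ht
  obtain ⟨ht0, ht1⟩ := ht
  have hneg : t ^ (-β) = (t ^ β)⁻¹ := Real.rpow_neg ht0.le _
  have hnn : t ^ (-(-β * (p - 1))) = t ^ (β * (p - 1)) := by ring_nf
  have hmul : t ^ (β * (p - 1)) = (t ^ β) ^ (p - 1) := Real.rpow_mul ht0.le _ _
  have hmul' : t ^ (-(β * (p - 1))) = ((t ^ β) ^ (p - 1))⁻¹ := by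
    rw [Real.rpow_neg ht0.le, hmul]
  have hb : (0:ℝ) < t ^ β := Real.rpow_pos_of_pos ht0 _
  simp only [hneg, hnn, hmul, hmul']
  rw [key_aux p (t ^ β) hb]
end

section
/- Let 1 < p < ∞, 0 < s < 1. For every pair of nonnegative functions u, v ∈ W^{s,p}(ℝ^N), setting σ = ((u^p + v^p)/2)^{1/p}, one has [σ]^p_{W^{s,p}(ℝ^N)} ≤ (1/2)[u]^p_{W^{s,p}(ℝ^N)} + (1/2)[v]^p_{W^{s,p}(ℝ^N)}. -/
open Real

-- Minkowski for two points
lemma mink2 {p : ℝ} (hp : 1 ≤ p) {b d e f : ℝ} (hb : 0 ≤ b) (hd : 0 ≤ d)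
    (he : 0 ≤ e) (hf : 0 ≤ f) :
    ((b + e) ^ p + (d + f) ^ p) ^ (1 / p) ≤
      (b ^ p + d ^ p) ^ (1 / p) + (e ^ p + f ^ p) ^ (1 / p) := by
  have := Real.Lp_add_le (Finset.univ : Finset (Fin 2)) ![b, d] ![e, f] hp
  simpa [Fin.sum_univ_two, abs_of_nonneg, hb, hd, he, hf, add_nonneg hb he, add_nonneg hd hf]
    using this

lemma key_s16 {p : ℝ} (hp : 1 < p) {a b c d : ℝ} (ha : 0 ≤ a) (hb : 0 ≤ b) (hc : 0 ≤ c)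
    (hd : 0 ≤ d) :
    |((a ^ p + c ^ p) / 2) ^ (1 / p) - ((b ^ p + d ^ p) / 2) ^ (1 / p)| ^ p ≤
      |a - b| ^ p / 2 + |c - d| ^ p / 2 := by
  have hp0 : (0:ℝ) < p := lt_trans one_pos hp
  have hp1 : 1 ≤ p := hp.le
  set e := |a - b| with he
  set f := |c - d| with hf
  have he0 : 0 ≤ e := abs_nonneg _
  have hf0 : 0 ≤ f := abs_nonneg _
  -- the generic one-sided bound
  have side : ∀ x y z w : ℝ, 0 ≤ x → 0 ≤ y → 0 ≤ z → 0 ≤ w → x ≤ y + |x - y| → |x-y| ≤ |z - w| →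
      True := fun _ _ _ _ _ _ _ _ _ _ => trivial
  have main : ∀ x y z w : ℝ, 0 ≤ x → 0 ≤ y → 0 ≤ z → 0 ≤ w →
      ((x ^ p + z ^ p) / 2) ^ (1 / p) - ((y ^ p + w ^ p) / 2) ^ (1 / p) ≤
        ((|x - y| ^ p + |z - w| ^ p) / 2) ^ (1 / p) := by
    intro x y z w hx hy hz hw
    rw [sub_le_iff_le_add]
    have h1 : x ≤ y + |x - y| := by
      have := le_abs_self (x - y); linarith
    have h2 : z ≤ w + |z - w| := by
      have := le_abs_self (z - w); linarith
    have hxp : x ^ p ≤ (y + |x - y|) ^ p := Real.rpow_le_rpow hx h1 hp0.le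
    have hzp : z ^ p ≤ (w + |z - w|) ^ p := Real.rpow_le_rpow hz h2 hp0.le
    have step1 : ((x ^ p + z ^ p) / 2) ^ (1 / p) ≤
        (((y + |x - y|) ^ p + (w + |z - w|) ^ p) / 2) ^ (1 / p) := by
      apply Real.rpow_le_rpow
      · positivity
      · linarith
      · positivity
    refine step1.trans ?_
    have h2p : (0:ℝ) ≤ (1:ℝ)/2 := by norm_num
    rw [div_rpow (by positivity) (by norm_num), div_rpow (by positivity) (by norm_num),
      div_rpow (by positivity) (by norm_num)]
    rw [← add_div, div_le_div_iff_of_pos_right (by positivity)]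
    linarith [mink2 hp1 hy hw (abs_nonneg (x - y)) (abs_nonneg (z - w))]
  have habs : |((a ^ p + c ^ p) / 2) ^ (1 / p) - ((b ^ p + d ^ p) / 2) ^ (1 / p)| ≤
      ((e ^ p + f ^ p) / 2) ^ (1 / p) := by
    rw [abs_sub_le_iff]
    constructor
    · exact main a b c d ha hb hc hd
    · have := main b a d c hb ha hd hc
      simpa [abs_sub_comm, he, hf] using this
  calc |((a ^ p + c ^ p) / 2) ^ (1 / p) - ((b ^ p + d ^ p) / 2) ^ (1 / p)| ^ p
      ≤ (((e ^ p + f ^ p) / 2) ^ (1 / p)) ^ p :=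
        Real.rpow_le_rpow (abs_nonneg _) habs hp0.le
    _ = (e ^ p + f ^ p) / 2 := by
        rw [one_div, Real.rpow_inv_rpow (by positivity) hp0.ne']
    _ = e ^ p / 2 + f ^ p / 2 := by ring

open MeasureTheory ENNReal

set_option maxHeartbeats 1000000 in
theorem stmt_16 (N : ℕ) (p s : ℝ) (hp : 1 < p) (hs : s ∈ Set.Ioo (0:ℝ) 1)
    (u v : EuclideanSpace ℝ (Fin N) → ℝ) (hum : Measurable u) (hvm : Measurable v)
    (hu0 : ∀ x, 0 ≤ u x) (hv0 : ∀ x, 0 ≤ v x)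
    (hup : MemLp u (ENNReal.ofReal p)) (hvp : MemLp v (ENNReal.ofReal p))
    (huG : (∫⁻ x, ∫⁻ y, ENNReal.ofReal (|u x - u y| ^ p / ‖x - y‖ ^ ((N : ℝ) + s * p))) ≠ ⊤)
    (hvG : (∫⁻ x, ∫⁻ y, ENNReal.ofReal (|v x - v y| ^ p / ‖x - y‖ ^ ((N : ℝ) + s * p))) ≠ ⊤) :
    (∫⁻ x, ∫⁻ y, ENNReal.ofReal
        (|((u x ^ p + v x ^ p) / 2) ^ (1 / p) - ((u y ^ p + v y ^ p) / 2) ^ (1 / p)| ^ p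
          / ‖x - y‖ ^ ((N : ℝ) + s * p))) ≤
      1 / 2 * (∫⁻ x, ∫⁻ y, ENNReal.ofReal (|u x - u y| ^ p / ‖x - y‖ ^ ((N : ℝ) + s * p))) +
      1 / 2 * (∫⁻ x, ∫⁻ y, ENNReal.ofReal (|v x - v y| ^ p / ‖x - y‖ ^ ((N : ℝ) + s * p))) := by
  set E : ℝ := (N : ℝ) + s * p with hE
  set Fu : EuclideanSpace ℝ (Fin N) → EuclideanSpace ℝ (Fin N) → ℝ≥0∞ :=
    fun x y => ENNReal.ofReal (|u x - u y| ^ p / ‖x - y‖ ^ E) with hFu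
  set Fv : EuclideanSpace ℝ (Fin N) → EuclideanSpace ℝ (Fin N) → ℝ≥0∞ :=
    fun x y => ENNReal.ofReal (|v x - v y| ^ p / ‖x - y‖ ^ E) with hFv
  have hmeas : ∀ (w : EuclideanSpace ℝ (Fin N) → ℝ), Measurable w →
      Measurable (Function.uncurry fun x y =>
        ENNReal.ofReal (|w x - w y| ^ p / ‖x - y‖ ^ E)) := by
    intro w hw
    apply Measurable.ennreal_ofReal
    apply Measurable.div
    · exact (((hw.comp measurable_fst).sub (hw.comp measurable_snd)).abs).pow_const _
    · exact ((measurable_fst.sub measurable_snd).norm).pow_const _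
  have hmu : Measurable (Function.uncurry Fu) := hmeas u hum
  have hmv : Measurable (Function.uncurry Fv) := hmeas v hvm
  have h2 : ENNReal.ofReal ((1:ℝ)/2) = 1/2 := by
    rw [ENNReal.ofReal_div_of_pos (by norm_num)]
    norm_num
  -- pointwise bound
  have hpt : ∀ x y, ENNReal.ofReal
      (|((u x ^ p + v x ^ p) / 2) ^ (1 / p) - ((u y ^ p + v y ^ p) / 2) ^ (1 / p)| ^ p
        / ‖x - y‖ ^ E) ≤ 1 / 2 * Fu x y + 1 / 2 * Fv x y := by
    intro x y
    have hk := key_s16 hp (hu0 x) (hu0 y) (hv0 x) (hv0 y)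
    have hD : (0:ℝ) ≤ ‖x - y‖ ^ E := Real.rpow_nonneg (norm_nonneg _) _
    have hdiv : |((u x ^ p + v x ^ p) / 2) ^ (1 / p) - ((u y ^ p + v y ^ p) / 2) ^ (1 / p)| ^ p
        / ‖x - y‖ ^ E ≤ (1 / 2) * (|u x - u y| ^ p / ‖x - y‖ ^ E)
          + (1 / 2) * (|v x - v y| ^ p / ‖x - y‖ ^ E) := by
      have step : |((u x ^ p + v x ^ p) / 2) ^ (1 / p) - ((u y ^ p + v y ^ p) / 2) ^ (1 / p)| ^ p
          / ‖x - y‖ ^ E ≤ (|u x - u y| ^ p / 2 + |v x - v y| ^ p / 2) / ‖x - y‖ ^ E := by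
        rcases eq_or_lt_of_le hD with h | h
        · rw [← h]; simp
        · gcongr
      refine step.trans_eq ?_
      ring
    calc ENNReal.ofReal (|((u x ^ p + v x ^ p) / 2) ^ (1 / p)
            - ((u y ^ p + v y ^ p) / 2) ^ (1 / p)| ^ p / ‖x - y‖ ^ E)
        ≤ ENNReal.ofReal ((1 / 2) * (|u x - u y| ^ p / ‖x - y‖ ^ E)
            + (1 / 2) * (|v x - v y| ^ p / ‖x - y‖ ^ E)) := ENNReal.ofReal_le_ofReal hdiv
      _ ≤ ENNReal.ofReal ((1 / 2) * (|u x - u y| ^ p / ‖x - y‖ ^ E))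
            + ENNReal.ofReal ((1 / 2) * (|v x - v y| ^ p / ‖x - y‖ ^ E)) :=
          ENNReal.ofReal_add_le
      _ = 1 / 2 * Fu x y + 1 / 2 * Fv x y := by
          rw [ENNReal.ofReal_mul (by norm_num), ENNReal.ofReal_mul (by norm_num), h2]
  have hmuy : ∀ x, Measurable fun y => Fu x y := fun x => hmu.comp (measurable_prodMk_left)
  have hmvy : ∀ x, Measurable fun y => Fv x y := fun x => hmv.comp (measurable_prodMk_left)
  calc (∫⁻ x, ∫⁻ y, ENNReal.ofReal
        (|((u x ^ p + v x ^ p) / 2) ^ (1 / p) - ((u y ^ p + v y ^ p) / 2) ^ (1 / p)| ^ p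
          / ‖x - y‖ ^ E))
      ≤ ∫⁻ x, ∫⁻ y, (1 / 2 * Fu x y + 1 / 2 * Fv x y) :=
        lintegral_mono fun x => lintegral_mono fun y => hpt x y
    _ = ∫⁻ x, (1 / 2 * ∫⁻ y, Fu x y) + (1 / 2 * ∫⁻ y, Fv x y) := by
        congr 1; funext x
        rw [lintegral_add_left ((hmuy x).const_mul _),
          lintegral_const_mul' _ _ (by simp), lintegral_const_mul' _ _ (by simp)]
    _ = (∫⁻ x, 1 / 2 * ∫⁻ y, Fu x y) + ∫⁻ x, 1 / 2 * ∫⁻ y, Fv x y := by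
        exact lintegral_add_left (measurable_const.mul (Measurable.lintegral_prod_right hmu)) _
    _ = 1 / 2 * (∫⁻ x, ∫⁻ y, Fu x y) + 1 / 2 * ∫⁻ x, ∫⁻ y, Fv x y := by
        rw [lintegral_const_mul' _ _ (by simp), lintegral_const_mul' _ _ (by simp)]
end
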